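/- arXiv:1108.5545 — 8 statements merged into one kernel-verified Lean document; each statement's English description precedes it below -/
import Mathlib

section
/- For every real δ with 1/2 < δ < 1 there exists a constant C > 0 such that for all t > 0 one has ∫₀ᵗ (1+t-s)^(-3/2) · (s^(1/2-δ) - t^(1/2-δ)) · (1+s)^(-1/2) ds ≤ C · (1+t)^(-1/2-δ). (Note that for 0 < s ≤ t and δ > 1/2 one has s^(1/2-δ) ≥ t^(1/2-δ), so the integrand is nonnegative.) -/
open MeasureTheory

/-- Bernoulli-type lower bound: for `x ≥ 1` and `0 ≤ q ≤ 1`, `1 - q(x-1) ≤ x^(-q)`. -/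
lemma aux_bern {x q : ℝ} (hx : 1 ≤ x) (hq0 : 0 ≤ q) (hq1 : q ≤ 1) :
    1 - q * (x - 1) ≤ x ^ (-q) := by
  have hx0 : (0:ℝ) < x := by linarith
  have hb : x ^ q ≤ 1 + q * (x - 1) := by
    have h := rpow_one_add_le_one_add_mul_self (s := x - 1) (by linarith) hq0 hq1
    rwa [show 1 + (x - 1) = x by ring] at h
  have hxq : 0 < x ^ q := Real.rpow_pos_of_pos hx0 q
  have hu : 0 ≤ q * (x - 1) := mul_nonneg hq0 (by linarith)
  rcases le_or_gt (1 - q * (x - 1)) 0 with h | h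
  · exact h.trans (Real.rpow_pos_of_pos hx0 _).le
  · rw [Real.rpow_neg hx0.le, ← one_div, le_div_iff₀ hxq]
    nlinarith [mul_le_mul_of_nonneg_left hb h.le]

/-- Tangent-line bound: for `0 < s ≤ t` and `0 ≤ q ≤ 1`,
`s^(-q) - t^(-q) ≤ q * s^(-q-1) * (t - s)`. -/
lemma aux_key {s t q : ℝ} (hs : 0 < s) (hst : s ≤ t) (hq0 : 0 ≤ q) (hq1 : q ≤ 1) :
    s ^ (-q) - t ^ (-q) ≤ q * s ^ (-q - 1) * (t - s) := by
  have ht : 0 < t := hs.trans_le hst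
  have hx : 1 ≤ t / s := (one_le_div hs).mpr hst
  have h1 : t ^ (-q) = s ^ (-q) * (t / s) ^ (-q) := by
    rw [← Real.mul_rpow hs.le (by positivity), show s * (t / s) = t by field_simp]
  have h2 := aux_bern hx hq0 hq1
  have hsq : 0 < s ^ (-q) := Real.rpow_pos_of_pos hs _
  have h4 : s ^ (-q) * (1 - (t / s) ^ (-q)) ≤ s ^ (-q) * (q * (t / s - 1)) := by
    apply mul_le_mul_of_nonneg_left _ hsq.le
    linarith
  have h5 : s ^ (-q) * (q * (t / s - 1)) = q * s ^ (-q - 1) * (t - s) := by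
    rw [show -q - 1 = -q + (-1) by ring, Real.rpow_add hs, Real.rpow_neg_one]
    field_simp
  calc s ^ (-q) - t ^ (-q) = s ^ (-q) * (1 - (t / s) ^ (-q)) := by rw [h1]; ring
    _ ≤ s ^ (-q) * (q * (t / s - 1)) := h4
    _ = q * s ^ (-q - 1) * (t - s) := h5

/-- Dividing the base by 2 costs a constant factor. -/
lemma aux_half {x q c : ℝ} (hx : 0 < x) (hc : (2:ℝ) ^ (-q) ≤ c) :
    (x / 2) ^ q ≤ c * x ^ q := by
  have h2 : (0:ℝ) ≤ 2 := by norm_num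
  have heq : (x / 2) ^ q = x ^ q * (2:ℝ) ^ (-q) := by
    rw [Real.div_rpow hx.le h2, Real.rpow_neg h2, div_eq_mul_inv]
  rw [heq]
  calc x ^ q * (2:ℝ) ^ (-q) ≤ x ^ q * c :=
        mul_le_mul_of_nonneg_left hc (Real.rpow_pos_of_pos hx q).le
    _ = c * x ^ q := mul_comm _ _

lemma two_rpow_le {p : ℝ} (hp : p ≤ 2) : (2:ℝ) ^ p ≤ 4 := by
  have h4 : (2:ℝ) ^ (2:ℝ) = 4 := by
    rw [show (2:ℝ) = ((2:ℕ):ℝ) from by norm_num]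
    rw [Real.rpow_natCast]
    norm_num
  calc (2:ℝ) ^ p ≤ (2:ℝ) ^ (2:ℝ) := Real.rpow_le_rpow_of_exponent_le one_le_two hp
    _ = 4 := h4

lemma two_rpow_le' {p : ℝ} (hp : p ≤ 1) : (2:ℝ) ^ p ≤ 2 := by
  calc (2:ℝ) ^ p ≤ (2:ℝ) ^ (1:ℝ) := Real.rpow_le_rpow_of_exponent_le one_le_two hp
    _ = 2 := Real.rpow_one 2

set_option maxHeartbeats 1000000 in
theorem integral_convolution_bound_singular
    (δ : ℝ) (hδ1 : 1/2 < δ) (hδ2 : δ < 1) :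
    ∃ C : ℝ, 0 < C ∧ ∀ t : ℝ, 0 < t →
      ∫ s in Set.Ioo (0:ℝ) t,
          (1 + t - s) ^ (-(3:ℝ)/2) * (s ^ ((1:ℝ)/2 - δ) - t ^ ((1:ℝ)/2 - δ)) *
            (1 + s) ^ (-(1:ℝ)/2)
        ≤ C * (1 + t) ^ (-(1:ℝ)/2 - δ) := by
  have h1δ : 0 < 1 - δ := by linarith
  refine ⟨4 / (1 - δ) + 8, by positivity, ?_⟩
  intro t ht
  set f : ℝ → ℝ := fun s =>
    (1 + t - s) ^ (-(3:ℝ)/2) * (s ^ ((1:ℝ)/2 - δ) - t ^ ((1:ℝ)/2 - δ)) *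
      (1 + s) ^ (-(1:ℝ)/2) with hf
  have expneg : (1:ℝ)/2 - δ ≤ 0 := by linarith
  -- nonnegativity of the integrand
  have fnn : ∀ s ∈ Set.Ioo (0:ℝ) t, 0 ≤ f s := by
    intro s hs
    obtain ⟨hs0, hst⟩ := hs
    have h1 : (0:ℝ) < 1 + t - s := by linarith
    have h2 : t ^ ((1:ℝ)/2 - δ) ≤ s ^ ((1:ℝ)/2 - δ) :=
      Real.rpow_le_rpow_of_nonpos hs0 hst.le expneg
    have hA := Real.rpow_pos_of_pos h1 (-(3:ℝ)/2)
    have hB := Real.rpow_pos_of_pos (show (0:ℝ) < 1 + s by linarith) (-(1:ℝ)/2)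
    exact mul_nonneg (mul_nonneg hA.le (sub_nonneg.mpr h2)) hB.le
  -- crude bound f s ≤ s^(-δ)
  have fle : ∀ s ∈ Set.Ioo (0:ℝ) t, f s ≤ s ^ (-δ) := by
    intro s hs
    obtain ⟨hs0, hst⟩ := hs
    have hA : (1 + t - s) ^ (-(3:ℝ)/2) ≤ 1 :=
      Real.rpow_le_one_of_one_le_of_nonpos (by linarith) (by norm_num)
    have hM : s ^ ((1:ℝ)/2 - δ) - t ^ ((1:ℝ)/2 - δ) ≤ s ^ ((1:ℝ)/2 - δ) := by
      have : 0 ≤ t ^ ((1:ℝ)/2 - δ) := (Real.rpow_pos_of_pos (hs0.trans hst) _).le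
      linarith
    have hM0 : 0 ≤ s ^ ((1:ℝ)/2 - δ) - t ^ ((1:ℝ)/2 - δ) :=
      sub_nonneg.mpr (Real.rpow_le_rpow_of_nonpos hs0 hst.le expneg)
    have hB : (1 + s) ^ (-(1:ℝ)/2) ≤ s ^ (-(1:ℝ)/2) :=
      Real.rpow_le_rpow_of_nonpos hs0 (by linarith) (by norm_num)
    have hB0 : 0 ≤ (1 + s) ^ (-(1:ℝ)/2) :=
      (Real.rpow_pos_of_pos (by linarith) _).le
    calc f s ≤ 1 * s ^ ((1:ℝ)/2 - δ) * s ^ (-(1:ℝ)/2) :=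
          mul_le_mul (mul_le_mul hA hM hM0 zero_le_one) hB hB0
            (mul_nonneg zero_le_one (Real.rpow_pos_of_pos hs0 _).le)
      _ = s ^ (-δ) := by
          rw [one_mul, ← Real.rpow_add hs0, show (1:ℝ)/2 - δ + -(1:ℝ)/2 = -δ by ring]
  -- integrability of dominating functions
  have hdom : IntegrableOn (fun s : ℝ => s ^ (-δ)) (Set.Ioo 0 t) := by
    have h := intervalIntegral.intervalIntegrable_rpow' (a := 0) (b := t)
      (r := -δ) (by linarith)
    rw [intervalIntegrable_iff, Set.uIoc_of_le ht.le] at h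
    exact h.mono_set Set.Ioo_subset_Ioc_self
  have hmeas : AEStronglyMeasurable f (volume.restrict (Set.Ioo 0 t)) := by
    apply Measurable.aestronglyMeasurable
    fun_prop
  have hint : IntegrableOn f (Set.Ioo 0 t) := by
    apply Integrable.mono' hdom hmeas
    rw [ae_restrict_iff' measurableSet_Ioo]
    filter_upwards with s hs
    rw [Real.norm_eq_abs, abs_of_nonneg (fnn s hs)]
    exact fle s hs
  -- integral of s^(-δ) on Ioo 0 T
  have int_rpow_Ioo : ∀ T : ℝ, 0 < T →
      ∫ s in Set.Ioo (0:ℝ) T, s ^ (-δ) = T ^ (1 - δ) / (1 - δ) := by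
    intro T hT
    rw [← integral_Ioc_eq_integral_Ioo, ← intervalIntegral.integral_of_le hT.le,
      integral_rpow (Or.inl (by linarith : (-1:ℝ) < -δ)),
      Real.zero_rpow (by intro h; rw [show -δ + 1 = 1 - δ by ring] at h; linarith),
      show -δ + 1 = 1 - δ by ring]
    ring
  set R : ℝ := (1 + t) ^ (-(1:ℝ)/2 - δ) with hR
  have hRpos : 0 < R := Real.rpow_pos_of_pos (by linarith) _
  rcases le_or_gt t 1 with ht1 | ht1
  · -- small t : crude bound suffices
    have step1 : ∫ s in Set.Ioo (0:ℝ) t, f s ≤ ∫ s in Set.Ioo (0:ℝ) t, s ^ (-δ) := by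
      apply integral_mono_of_nonneg
      · filter_upwards [ae_restrict_mem measurableSet_Ioo] with s hs using fnn s hs
      · exact hdom
      · filter_upwards [ae_restrict_mem measurableSet_Ioo] with s hs using fle s hs
    have step2 : (t:ℝ) ^ (1 - δ) ≤ 1 := Real.rpow_le_one ht.le ht1 (by linarith)
    have hp : (1:ℝ)/4 ≤ R := by
      have e1 : (2:ℝ) ^ (-(1:ℝ)/2 - δ) ≤ R :=
        Real.rpow_le_rpow_of_nonpos (by linarith) (by linarith) (by linarith)
      have e2 : (2:ℝ) ^ (-(3:ℝ)/2) ≤ (2:ℝ) ^ (-(1:ℝ)/2 - δ) :=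
        Real.rpow_le_rpow_of_exponent_le one_le_two (by linarith)
      have e3 : (1:ℝ)/4 ≤ (2:ℝ) ^ (-(3:ℝ)/2) := by
        rw [show (-(3:ℝ)/2) = -((3:ℝ)/2) by ring, Real.rpow_neg (by norm_num)]
        have h32 : (2:ℝ) ^ ((3:ℝ)/2) ≤ 4 := two_rpow_le (by norm_num)
        have hpos : (0:ℝ) < (2:ℝ) ^ ((3:ℝ)/2) := Real.rpow_pos_of_pos two_pos _
        rw [show (1:ℝ)/4 = 4⁻¹ by norm_num]
        exact inv_anti₀ hpos h32
      linarith
    calc ∫ s in Set.Ioo (0:ℝ) t, f s ≤ ∫ s in Set.Ioo (0:ℝ) t, s ^ (-δ) := step1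
      _ = t ^ (1 - δ) / (1 - δ) := int_rpow_Ioo t ht
      _ ≤ (4 / (1 - δ) + 8) * R := by
          rw [div_le_iff₀ h1δ]
          have h8 : 0 ≤ 8 * R * (1 - δ) := by positivity
          have key : 1 ≤ 4 / (1 - δ) * R * (1 - δ) := by
            have h4R : 4 / (1 - δ) * R * (1 - δ) = 4 * R := by
              field_simp
            rw [h4R]
            linarith
          nlinarith
  · -- large t : split the integral at t/2
    have ht2 : (0:ℝ) < t / 2 := by linarith
    have hunion : Set.Ioo (0:ℝ) t = Set.Ioo 0 (t/2) ∪ Set.Ico (t/2) t :=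
      (Set.Ioo_union_Ico_eq_Ioo (by linarith) (by linarith)).symm
    have hdisj : Disjoint (Set.Ioo (0:ℝ) (t/2)) (Set.Ico (t/2) t) := by
      rw [Set.disjoint_left]
      rintro x ⟨_, h2⟩ ⟨h3, _⟩
      linarith
    have hsub1 : Set.Ioo (0:ℝ) (t/2) ⊆ Set.Ioo 0 t := by
      apply Set.Ioo_subset_Ioo le_rfl; linarith
    have hsub2 : Set.Ico (t/2) t ⊆ Set.Ioo (0:ℝ) t := by
      rintro x ⟨h1, h2⟩; exact ⟨by linarith, h2⟩
    have hsub2' : Set.Ioo (t/2) t ⊆ Set.Ioo (0:ℝ) t := by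
      apply Set.Ioo_subset_Ioo _ le_rfl; linarith
    have hsplit : ∫ s in Set.Ioo (0:ℝ) t, f s =
        (∫ s in Set.Ioo (0:ℝ) (t/2), f s) + ∫ s in Set.Ioo (t/2) t, f s := by
      rw [hunion, setIntegral_union hdisj measurableSet_Ico (hint.mono_set hsub1)
        (hint.mono_set hsub2), integral_Ico_eq_integral_Ioo]
    -- piece 1
    have hb1 : ∫ s in Set.Ioo (0:ℝ) (t/2), f s ≤
        ((1+t)/2) ^ (-(3:ℝ)/2) * ((t/2) ^ (1 - δ) / (1 - δ)) := by
      have hmono : ∫ s in Set.Ioo (0:ℝ) (t/2), f s ≤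
          ∫ s in Set.Ioo (0:ℝ) (t/2), ((1+t)/2) ^ (-(3:ℝ)/2) * s ^ (-δ) := by
        apply integral_mono_of_nonneg
        · filter_upwards [ae_restrict_mem measurableSet_Ioo] with s hs using fnn s (hsub1 hs)
        · exact ((hdom.mono_set (Set.Ioo_subset_Ioo le_rfl (by linarith))).const_mul _)
        · filter_upwards [ae_restrict_mem measurableSet_Ioo] with s hs
          obtain ⟨hs0, hst⟩ := hs
          have hA : (1 + t - s) ^ (-(3:ℝ)/2) ≤ ((1+t)/2) ^ (-(3:ℝ)/2) :=
            Real.rpow_le_rpow_of_nonpos (by linarith) (by linarith) (by norm_num)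
          have hM : s ^ ((1:ℝ)/2 - δ) - t ^ ((1:ℝ)/2 - δ) ≤ s ^ ((1:ℝ)/2 - δ) := by
            have : 0 ≤ t ^ ((1:ℝ)/2 - δ) := (Real.rpow_pos_of_pos (by linarith) _).le
            linarith
          have hM0 : 0 ≤ s ^ ((1:ℝ)/2 - δ) - t ^ ((1:ℝ)/2 - δ) :=
            sub_nonneg.mpr (Real.rpow_le_rpow_of_nonpos hs0 (by linarith) expneg)
          have hB : (1 + s) ^ (-(1:ℝ)/2) ≤ s ^ (-(1:ℝ)/2) :=
            Real.rpow_le_rpow_of_nonpos hs0 (by linarith) (by norm_num)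
          have hB0 : 0 ≤ (1 + s) ^ (-(1:ℝ)/2) :=
            (Real.rpow_pos_of_pos (by linarith) _).le
          have hc0 : (0:ℝ) ≤ ((1+t)/2) ^ (-(3:ℝ)/2) :=
            (Real.rpow_pos_of_pos (by linarith) _).le
          calc f s ≤ ((1+t)/2) ^ (-(3:ℝ)/2) * s ^ ((1:ℝ)/2 - δ) * s ^ (-(1:ℝ)/2) :=
                mul_le_mul (mul_le_mul hA hM hM0 hc0) hB hB0
                  (mul_nonneg hc0 (Real.rpow_pos_of_pos hs0 _).le)
            _ = ((1+t)/2) ^ (-(3:ℝ)/2) * s ^ (-δ) := by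
                rw [mul_assoc, ← Real.rpow_add hs0,
                  show (1:ℝ)/2 - δ + -(1:ℝ)/2 = -δ by ring]
      rw [integral_const_mul, int_rpow_Ioo (t/2) ht2] at hmono
      exact hmono
    -- piece 2
    have hb2 : ∫ s in Set.Ioo (t/2) t, f s ≤
        (δ - 1/2) * (t/2) ^ (-(1:ℝ)/2 - δ) * ((1+t)/2) ^ (-(1:ℝ)/2) *
          (2 * (t/2) ^ ((1:ℝ)/2)) := by
      -- integrability of (t - s)^(-1/2) on Ioo (t/2) t
      have hdom2 : IntegrableOn (fun s : ℝ => (t - s) ^ (-(1:ℝ)/2)) (Set.Ioo (t/2) t) := by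
        have h := (intervalIntegral.intervalIntegrable_rpow' (a := 0) (b := t/2)
          (r := -(1:ℝ)/2) (by norm_num)).comp_sub_left t
        rw [sub_zero, show t - t/2 = t/2 by ring] at h
        exact h.2.mono_set Set.Ioo_subset_Ioc_self
      have hmono : ∫ s in Set.Ioo (t/2) t, f s ≤
          ∫ s in Set.Ioo (t/2) t,
            (δ - 1/2) * (t/2) ^ (-(1:ℝ)/2 - δ) * ((1+t)/2) ^ (-(1:ℝ)/2) *
              (t - s) ^ (-(1:ℝ)/2) := by
        apply integral_mono_of_nonneg
        · filter_upwards [ae_restrict_mem measurableSet_Ioo] with s hs using fnn s (hsub2' hs)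
        · exact hdom2.const_mul _
        · filter_upwards [ae_restrict_mem measurableSet_Ioo] with s hs
          obtain ⟨hs0, hst⟩ := hs
          have hspos : (0:ℝ) < s := lt_trans ht2 hs0
          have htspos : (0:ℝ) < t - s := by linarith
          have hA : (1 + t - s) ^ (-(3:ℝ)/2) ≤ (t - s) ^ (-(3:ℝ)/2) :=
            Real.rpow_le_rpow_of_nonpos htspos (by linarith) (by norm_num)
          have hA0 : 0 ≤ (1 + t - s) ^ (-(3:ℝ)/2) :=
            (Real.rpow_pos_of_pos (by linarith) _).le
          have hM1 : s ^ ((1:ℝ)/2 - δ) - t ^ ((1:ℝ)/2 - δ) ≤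
              (δ - 1/2) * s ^ (-(1:ℝ)/2 - δ) * (t - s) := by
            have h := aux_key (q := δ - 1/2) hspos hst.le (by linarith) (by linarith)
            rw [show -(δ - 1/2) = (1:ℝ)/2 - δ by ring,
              show (1:ℝ)/2 - δ - 1 = -(1:ℝ)/2 - δ by ring] at h
            exact h
          have hM2 : s ^ (-(1:ℝ)/2 - δ) ≤ (t/2) ^ (-(1:ℝ)/2 - δ) :=
            Real.rpow_le_rpow_of_nonpos ht2 hs0.le (by linarith)
          have hM : s ^ ((1:ℝ)/2 - δ) - t ^ ((1:ℝ)/2 - δ) ≤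
              (δ - 1/2) * (t/2) ^ (-(1:ℝ)/2 - δ) * (t - s) := by
            calc s ^ ((1:ℝ)/2 - δ) - t ^ ((1:ℝ)/2 - δ)
                ≤ (δ - 1/2) * s ^ (-(1:ℝ)/2 - δ) * (t - s) := hM1
              _ ≤ (δ - 1/2) * (t/2) ^ (-(1:ℝ)/2 - δ) * (t - s) := by
                  apply mul_le_mul_of_nonneg_right _ htspos.le
                  exact mul_le_mul_of_nonneg_left hM2 (by linarith)
          have hM0 : 0 ≤ s ^ ((1:ℝ)/2 - δ) - t ^ ((1:ℝ)/2 - δ) :=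
            sub_nonneg.mpr (Real.rpow_le_rpow_of_nonpos hspos hst.le expneg)
          have hB : (1 + s) ^ (-(1:ℝ)/2) ≤ ((1+t)/2) ^ (-(1:ℝ)/2) :=
            Real.rpow_le_rpow_of_nonpos (by linarith) (by linarith) (by norm_num)
          have hB0 : 0 ≤ (1 + s) ^ (-(1:ℝ)/2) :=
            (Real.rpow_pos_of_pos (by linarith) _).le
          have hts0 : (0:ℝ) ≤ (t - s) ^ (-(3:ℝ)/2) :=
            (Real.rpow_pos_of_pos htspos _).le
          have hmid0 : (0:ℝ) ≤ (δ - 1/2) * (t/2) ^ (-(1:ℝ)/2 - δ) * (t - s) :=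
            mul_nonneg (mul_nonneg (by linarith) (Real.rpow_pos_of_pos ht2 _).le) htspos.le
          have step : f s ≤ (t - s) ^ (-(3:ℝ)/2) *
              ((δ - 1/2) * (t/2) ^ (-(1:ℝ)/2 - δ) * (t - s)) * ((1+t)/2) ^ (-(1:ℝ)/2) :=
            mul_le_mul (mul_le_mul hA hM hM0 hts0) hB hB0 (mul_nonneg hts0 hmid0)
          have collapse : (t - s) ^ (-(3:ℝ)/2) * (t - s) = (t - s) ^ (-(1:ℝ)/2) := by
            nth_rewrite 2 [show t - s = (t - s) ^ (1:ℝ) from (Real.rpow_one _).symm]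
            rw [← Real.rpow_add htspos, show -(3:ℝ)/2 + 1 = -(1:ℝ)/2 by norm_num]
          calc f s ≤ (t - s) ^ (-(3:ℝ)/2) *
              ((δ - 1/2) * (t/2) ^ (-(1:ℝ)/2 - δ) * (t - s)) *
                ((1+t)/2) ^ (-(1:ℝ)/2) := step
            _ = (δ - 1/2) * (t/2) ^ (-(1:ℝ)/2 - δ) * ((1+t)/2) ^ (-(1:ℝ)/2) *
                ((t - s) ^ (-(3:ℝ)/2) * (t - s)) := by ring
            _ = (δ - 1/2) * (t/2) ^ (-(1:ℝ)/2 - δ) * ((1+t)/2) ^ (-(1:ℝ)/2) *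
                (t - s) ^ (-(1:ℝ)/2) := by rw [collapse]
      have hJ : ∫ s in Set.Ioo (t/2) t, (t - s) ^ (-(1:ℝ)/2) = 2 * (t/2) ^ ((1:ℝ)/2) := by
        rw [← integral_Ioc_eq_integral_Ioo,
          ← intervalIntegral.integral_of_le (by linarith : t/2 ≤ t)]
        rw [intervalIntegral.integral_comp_sub_left (fun u : ℝ => u ^ (-(1:ℝ)/2)) t]
        rw [sub_self, show t - t/2 = t/2 by ring,
          integral_rpow (Or.inl (by norm_num : (-1:ℝ) < -(1:ℝ)/2))]
        rw [Real.zero_rpow (by norm_num : -(1:ℝ)/2 + 1 ≠ 0),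
          show -(1:ℝ)/2 + 1 = (1:ℝ)/2 by norm_num]
        ring
      rw [integral_const_mul, hJ] at hmono
      exact hmono
    -- combine
    have hhalf : (0:ℝ) < (1 + t)/2 := by linarith
    -- bound piece 1 by (4/(1-δ)) * R
    have hfin1 : ((1+t)/2) ^ (-(3:ℝ)/2) * ((t/2) ^ (1 - δ) / (1 - δ)) ≤
        4 / (1 - δ) * R := by
      have hc1 : ((1+t)/2) ^ (-(3:ℝ)/2) ≤ 4 * (1+t) ^ (-(3:ℝ)/2) := by
        apply aux_half (by linarith)
        rw [show -(-(3:ℝ)/2) = (3:ℝ)/2 by ring]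
        exact two_rpow_le (by norm_num)
      have hc2 : (t/2) ^ (1 - δ) ≤ (1+t) ^ (1 - δ) :=
        Real.rpow_le_rpow ht2.le (by linarith) (by linarith)
      calc ((1+t)/2) ^ (-(3:ℝ)/2) * ((t/2) ^ (1 - δ) / (1 - δ))
          ≤ (4 * (1+t) ^ (-(3:ℝ)/2)) * ((1+t) ^ (1 - δ) / (1 - δ)) := by
            apply mul_le_mul hc1 ((div_le_div_iff_of_pos_right h1δ).mpr hc2)
              (div_nonneg (Real.rpow_pos_of_pos ht2 _).le h1δ.le)
              (mul_nonneg (by norm_num) (Real.rpow_pos_of_pos (by linarith) _).le)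
        _ = 4 / (1 - δ) * ((1+t) ^ (-(3:ℝ)/2) * (1+t) ^ (1 - δ)) := by ring
        _ = 4 / (1 - δ) * R := by
            rw [← Real.rpow_add (by linarith),
              show -(3:ℝ)/2 + (1 - δ) = -(1:ℝ)/2 - δ by ring]
    -- bound piece 2 by 8 * R
    have hfin2 : (δ - 1/2) * (t/2) ^ (-(1:ℝ)/2 - δ) * ((1+t)/2) ^ (-(1:ℝ)/2) *
        (2 * (t/2) ^ ((1:ℝ)/2)) ≤ 8 * R := by
      have hcol : (t/2) ^ (-(1:ℝ)/2 - δ) * (t/2) ^ ((1:ℝ)/2) = (t/2) ^ (-δ) := by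
        rw [← Real.rpow_add ht2, show -(1:ℝ)/2 - δ + (1:ℝ)/2 = -δ by ring]
      have e1 : (t/2) ^ (-δ) ≤ 4 * (1+t) ^ (-δ) := by
        have s1 : (t/2) ^ (-δ) ≤ ((1+t)/4) ^ (-δ) :=
          Real.rpow_le_rpow_of_nonpos (by linarith) (by linarith) (by linarith)
        have s2 : ((1+t)/4) ^ (-δ) ≤ 2 * ((1+t)/2) ^ (-δ) := by
          rw [show (1+t)/4 = ((1+t)/2)/2 by ring]
          apply aux_half hhalf
          rw [neg_neg]
          exact two_rpow_le' hδ2.le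
        have s3 : ((1+t)/2) ^ (-δ) ≤ 2 * (1+t) ^ (-δ) := by
          apply aux_half (by linarith)
          rw [neg_neg]
          exact two_rpow_le' hδ2.le
        calc (t/2) ^ (-δ) ≤ 2 * ((1+t)/2) ^ (-δ) := s1.trans s2
          _ ≤ 2 * (2 * (1+t) ^ (-δ)) := by linarith [s3]
          _ = 4 * (1+t) ^ (-δ) := by ring
      have e2 : ((1+t)/2) ^ (-(1:ℝ)/2) ≤ 2 * (1+t) ^ (-(1:ℝ)/2) := by
        apply aux_half (by linarith)
        rw [show -(-(1:ℝ)/2) = (1:ℝ)/2 by ring]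
        exact two_rpow_le' (by norm_num)
      have e3 : δ - 1/2 ≤ 1/2 := by linarith
      have p1 : 0 ≤ (t/2) ^ (-δ) := (Real.rpow_pos_of_pos ht2 _).le
      have p2 : 0 ≤ ((1+t)/2) ^ (-(1:ℝ)/2) := (Real.rpow_pos_of_pos hhalf _).le
      have p3 : (0:ℝ) ≤ δ - 1/2 := by linarith
      calc (δ - 1/2) * (t/2) ^ (-(1:ℝ)/2 - δ) * ((1+t)/2) ^ (-(1:ℝ)/2) *
          (2 * (t/2) ^ ((1:ℝ)/2))
          = 2 * ((δ - 1/2) * ((t/2) ^ (-(1:ℝ)/2 - δ) * (t/2) ^ ((1:ℝ)/2)) *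
              ((1+t)/2) ^ (-(1:ℝ)/2)) := by ring
        _ = 2 * ((δ - 1/2) * (t/2) ^ (-δ) * ((1+t)/2) ^ (-(1:ℝ)/2)) := by rw [hcol]
        _ ≤ 2 * ((1/2) * (4 * (1+t) ^ (-δ)) * (2 * (1+t) ^ (-(1:ℝ)/2))) := by
            apply mul_le_mul_of_nonneg_left _ (by norm_num : (0:ℝ) ≤ 2)
            apply mul_le_mul _ e2 p2
              (mul_nonneg (by norm_num) (mul_nonneg (by norm_num)
                (Real.rpow_pos_of_pos (by linarith) _).le))
            exact mul_le_mul e3 e1 p1 (by norm_num)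
        _ = 8 * ((1+t) ^ (-δ) * (1+t) ^ (-(1:ℝ)/2)) := by ring
        _ = 8 * R := by
            rw [← Real.rpow_add (by linarith),
              show -δ + -(1:ℝ)/2 = -(1:ℝ)/2 - δ by ring]
    calc ∫ s in Set.Ioo (0:ℝ) t, f s
        = (∫ s in Set.Ioo (0:ℝ) (t/2), f s) + ∫ s in Set.Ioo (t/2) t, f s := hsplit
      _ ≤ ((1+t)/2) ^ (-(3:ℝ)/2) * ((t/2) ^ (1 - δ) / (1 - δ)) +
          (δ - 1/2) * (t/2) ^ (-(1:ℝ)/2 - δ) * ((1+t)/2) ^ (-(1:ℝ)/2) *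
            (2 * (t/2) ^ ((1:ℝ)/2)) := add_le_add hb1 hb2
      _ ≤ 4 / (1 - δ) * R + 8 * R := add_le_add hfin1 hfin2
      _ = (4 / (1 - δ) + 8) * R := by ring
end

section
/- For every real δ with 1/2 < δ < 1 there exists a constant C > 0 such that for all t > 0 one has ∫₀ᵗ (1+t-s)^(-3/2) · ((1+s)^(1/2-δ) - (1+t)^(1/2-δ)) · (1+s)^(-1/2) ds ≤ C · (1+t)^(-1/2-δ). (Note that for 0 ≤ s ≤ t and δ > 1/2 one has (1+s)^(1/2-δ) ≥ (1+t)^(1/2-δ), so the integrand is nonnegative.) -/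
open MeasureTheory Set

private lemma contOn_add_rpow (a p : ℝ) (S : Set ℝ) (h : ∀ x ∈ S, 0 < a + x) :
    ContinuousOn (fun x : ℝ => (a + x) ^ p) S :=
  ContinuousOn.rpow_const (by fun_prop) (fun x hx => Or.inl (h x hx).ne')

private lemma contOn_sub_rpow (a p : ℝ) (S : Set ℝ) (h : ∀ x ∈ S, 0 < a - x) :
    ContinuousOn (fun x : ℝ => (a - x) ^ p) S :=
  ContinuousOn.rpow_const (by fun_prop) (fun x hx => Or.inl (h x hx).ne')

private lemma hasDerivAt_add_rpow (p a x : ℝ) (hx : 0 < a + x) :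
    HasDerivAt (fun y : ℝ => (a + y) ^ p) (p * (a + x) ^ (p - 1)) x := by
  have h : HasDerivAt (fun y : ℝ => a + y) 1 x := (hasDerivAt_id x).const_add a
  have := (Real.hasDerivAt_rpow_const (x := a + x) (p := p) (Or.inl hx.ne')).comp x h
  simpa [Function.comp_def] using this

private lemma hasDerivAt_sub_rpow (p a x : ℝ) (hx : 0 < a - x) :
    HasDerivAt (fun y : ℝ => (a - y) ^ p) (-(p * (a - x) ^ (p - 1))) x := by
  have h : HasDerivAt (fun y : ℝ => a - y) (-1) x := (hasDerivAt_id x).const_sub a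
  have := (Real.hasDerivAt_rpow_const (x := a - x) (p := p) (Or.inl hx.ne')).comp x h
  simpa [Function.comp_def] using this

private lemma half_bound {u y q : ℝ} (hu : 0 < u) (hy : u/2 ≤ y) (hq1 : -2 ≤ q) (hq2 : q ≤ 0) :
    y ^ q ≤ 4 * u ^ q := by
  have h2 : y ^ q ≤ (u/2) ^ q := Real.rpow_le_rpow_of_nonpos (by positivity) hy hq2
  have h3 : (u/2 : ℝ) ^ q = u ^ q / 2 ^ q := Real.div_rpow hu.le (by norm_num) q
  have h4 : (4:ℝ)⁻¹ ≤ (2:ℝ) ^ q := by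
    have h5 : (2:ℝ) ^ (-2:ℝ) ≤ 2 ^ q := Real.rpow_le_rpow_of_exponent_le one_le_two hq1
    have h6 : (2:ℝ) ^ (-2:ℝ) = 4⁻¹ := by
      rw [show (-2:ℝ) = ((-2:ℤ):ℝ) by norm_num, Real.rpow_intCast]; norm_num
    rw [h6] at h5; exact h5
  have h7 : u ^ q / 2 ^ q ≤ u ^ q / 4⁻¹ :=
    div_le_div_of_nonneg_left (Real.rpow_nonneg hu.le q) (by norm_num) h4
  have h8 : u ^ q / (4:ℝ)⁻¹ = 4 * u ^ q := by
    rw [div_eq_mul_inv, inv_inv, mul_comm]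
  calc y ^ q ≤ (u/2) ^ q := h2
    _ = u ^ q / 2 ^ q := h3
    _ ≤ u ^ q / 4⁻¹ := h7
    _ = 4 * u ^ q := h8

private lemma mvt_bound (δ : ℝ) (hδ1 : 1/2 < δ) {s t : ℝ} (hs : 0 ≤ s) (hst : s ≤ t) :
    (1 + s) ^ ((1:ℝ)/2 - δ) - (1 + t) ^ ((1:ℝ)/2 - δ) ≤
      (δ - 1/2) * (t - s) * (1 + s) ^ (-(1:ℝ)/2 - δ) := by
  rcases eq_or_lt_of_le hst with rfl | h
  · simp
  · have hs1 : (0:ℝ) < 1 + s := by linarith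
    obtain ⟨c, hc, hceq⟩ := exists_hasDerivAt_eq_slope (fun y => (1+y) ^ ((1:ℝ)/2-δ))
      (fun y => ((1:ℝ)/2-δ) * (1+y) ^ ((1:ℝ)/2-δ-1)) h
      (contOn_add_rpow 1 ((1:ℝ)/2-δ) _ (fun x hx => by have := hx.1; linarith))
      (fun x hx => hasDerivAt_add_rpow _ 1 x (by have := hx.1; linarith))
    have hts : (0:ℝ) < t - s := by linarith
    rw [eq_div_iff hts.ne'] at hceq
    have hexp : ((1:ℝ)/2-δ-1) = -(1:ℝ)/2 - δ := by ring
    rw [hexp] at hceq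
    have hq : (1+c) ^ (-(1:ℝ)/2-δ) ≤ (1+s) ^ (-(1:ℝ)/2-δ) :=
      Real.rpow_le_rpow_of_nonpos hs1 (by have := hc.1; linarith) (by linarith)
    have hd : (0:ℝ) ≤ (δ - 1/2) * (t - s) := by nlinarith
    nlinarith [mul_le_mul_of_nonneg_left hq hd, hceq]

set_option maxHeartbeats 1000000 in
theorem integral_convolution_bound_shifted
    (δ : ℝ) (hδ1 : 1/2 < δ) (hδ2 : δ < 1) :
    ∃ C : ℝ, 0 < C ∧ ∀ t : ℝ, 0 < t →
      ∫ s in Set.Ioo (0:ℝ) t,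
          (1 + t - s) ^ (-(3:ℝ)/2) *
            ((1 + s) ^ ((1:ℝ)/2 - δ) - (1 + t) ^ ((1:ℝ)/2 - δ)) *
            (1 + s) ^ (-(1:ℝ)/2)
        ≤ C * (1 + t) ^ (-(1:ℝ)/2 - δ) := by
  have h1δ : (0:ℝ) < 1 - δ := by linarith
  refine ⟨4/(1-δ) + 8, by positivity, ?_⟩
  intro t ht
  set f : ℝ → ℝ := fun s => (1 + t - s) ^ (-(3:ℝ)/2) *
      ((1 + s) ^ ((1:ℝ)/2 - δ) - (1 + t) ^ ((1:ℝ)/2 - δ)) * (1 + s) ^ (-(1:ℝ)/2) with hf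
  have ht1 : (0:ℝ) < 1 + t := by linarith
  have hfc : ContinuousOn f (Icc 0 t) := by
    refine ContinuousOn.mul (ContinuousOn.mul ?_ (ContinuousOn.sub ?_ continuousOn_const)) ?_
    · exact contOn_sub_rpow (1+t) _ _ (fun x hx => by have := hx.2; linarith)
    · exact contOn_add_rpow 1 _ _ (fun x hx => by have := hx.1; linarith)
    · exact contOn_add_rpow 1 _ _ (fun x hx => by have := hx.1; linarith)
  have hsub1 : uIcc (0:ℝ) (t/2) ⊆ Icc 0 t := by
    rw [uIcc_of_le (by linarith)]; exact Icc_subset_Icc le_rfl (by linarith)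
  have hsub2 : uIcc (t/2) t ⊆ Icc 0 t := by
    rw [uIcc_of_le (by linarith)]; exact Icc_subset_Icc (by linarith) le_rfl
  have hI1 : IntervalIntegrable f volume 0 (t/2) := (hfc.mono hsub1).intervalIntegrable
  have hI2 : IntervalIntegrable f volume (t/2) t := (hfc.mono hsub2).intervalIntegrable
  have hsplit : ∫ s in Ioo (0:ℝ) t, f s = (∫ s in (0:ℝ)..(t/2), f s) + ∫ s in (t/2)..t, f s := by
    rw [← integral_Ioc_eq_integral_Ioo, ← intervalIntegral.integral_of_le ht.le,
      ← intervalIntegral.integral_add_adjacent_intervals hI1 hI2]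
  -- Piece 1
  have hg1i : IntervalIntegrable (fun s : ℝ => 4 * (1+t) ^ (-(3:ℝ)/2) * (1+s) ^ (-δ))
      volume 0 (t/2) := by
    apply ContinuousOn.intervalIntegrable
    exact ContinuousOn.mul continuousOn_const
      (contOn_add_rpow 1 _ _ (fun x hx => by have := (hsub1 hx).1; linarith))
  have key1 : ∫ s in (0:ℝ)..(t/2), f s ≤ (4/(1-δ)) * (1+t) ^ (-(1:ℝ)/2 - δ) := by
    have hmono : ∫ s in (0:ℝ)..(t/2), f s ≤
        ∫ s in (0:ℝ)..(t/2), 4 * (1+t) ^ (-(3:ℝ)/2) * (1+s) ^ (-δ) := by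
      apply intervalIntegral.integral_mono_on (by linarith) hI1 hg1i
      intro x hx
      have hx0 : (0:ℝ) ≤ x := hx.1
      have hxt : x ≤ t/2 := hx.2
      have hx1 : (0:ℝ) < 1 + x := by linarith
      have htx : (0:ℝ) < 1 + t - x := by linarith
      have hA : (1+t-x) ^ (-(3:ℝ)/2) ≤ 4 * (1+t) ^ (-(3:ℝ)/2) :=
        half_bound ht1 (by linarith) (by norm_num) (by norm_num)
      have hB : (1+x) ^ ((1:ℝ)/2-δ) - (1+t) ^ ((1:ℝ)/2-δ) ≤ (1+x) ^ ((1:ℝ)/2-δ) := by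
        have := Real.rpow_nonneg ht1.le ((1:ℝ)/2-δ); linarith
      have hBpos : (0:ℝ) ≤ (1+x) ^ ((1:ℝ)/2-δ) - (1+t) ^ ((1:ℝ)/2-δ) := by
        have := Real.rpow_le_rpow_of_nonpos hx1 (by linarith : 1+x ≤ 1+t)
          (by linarith : (1:ℝ)/2-δ ≤ 0)
        linarith
      have hE : (0:ℝ) ≤ (1+x) ^ (-(1:ℝ)/2) := Real.rpow_nonneg hx1.le _
      have h1 : (1+t-x) ^ (-(3:ℝ)/2) * ((1+x) ^ ((1:ℝ)/2-δ) - (1+t) ^ ((1:ℝ)/2-δ))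
          ≤ (4 * (1+t) ^ (-(3:ℝ)/2)) * (1+x) ^ ((1:ℝ)/2-δ) :=
        mul_le_mul hA hB hBpos (by positivity)
      simp only [hf]
      calc (1+t-x) ^ (-(3:ℝ)/2) * ((1+x) ^ ((1:ℝ)/2-δ) - (1+t) ^ ((1:ℝ)/2-δ)) *
            (1+x) ^ (-(1:ℝ)/2)
          ≤ (4 * (1+t) ^ (-(3:ℝ)/2)) * (1+x) ^ ((1:ℝ)/2-δ) * (1+x) ^ (-(1:ℝ)/2) :=
            mul_le_mul_of_nonneg_right h1 hE
        _ = 4 * (1+t) ^ (-(3:ℝ)/2) * (1+x) ^ (-δ) := by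
            rw [mul_assoc, ← Real.rpow_add hx1,
              show ((1:ℝ)/2 - δ + -(1:ℝ)/2) = -δ by ring]
    have hJ : ∫ s in (0:ℝ)..(t/2), (1+s) ^ (-δ) = ((1+t/2) ^ (1-δ) - 1) / (1-δ) := by
      have hd : ∀ x ∈ uIcc (0:ℝ) (t/2), HasDerivAt (fun y => (1+y) ^ (1-δ) / (1-δ))
          ((1+x) ^ (-δ)) x := by
        intro x hx
        have hx1 : (0:ℝ) < 1 + x := by have := (hsub1 hx).1; linarith
        have hder := (hasDerivAt_add_rpow (1-δ) 1 x hx1).div_const (1-δ)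
        have heq : (1-δ) * (1+x) ^ (1-δ-1) / (1-δ) = (1+x) ^ (-δ) := by
          rw [mul_comm, mul_div_assoc, div_self h1δ.ne', mul_one,
            show (1-δ-1 : ℝ) = -δ by ring]
        rw [heq] at hder; exact hder
      have hint : IntervalIntegrable (fun s : ℝ => (1+s) ^ (-δ)) volume 0 (t/2) := by
        apply ContinuousOn.intervalIntegrable
        exact contOn_add_rpow 1 _ _ (fun x hx => by have := (hsub1 hx).1; linarith)
      rw [intervalIntegral.integral_eq_sub_of_hasDerivAt hd hint]
      norm_num [Real.one_rpow, sub_div]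
    have hJle : ∫ s in (0:ℝ)..(t/2), (1+s) ^ (-δ) ≤ (1+t) ^ (1-δ) / (1-δ) := by
      rw [hJ]
      have h1 : (1+t/2 : ℝ) ^ (1-δ) ≤ (1+t) ^ (1-δ) :=
        Real.rpow_le_rpow (by linarith) (by linarith) h1δ.le
      rw [div_le_div_iff₀ h1δ h1δ]
      nlinarith
    calc ∫ s in (0:ℝ)..(t/2), f s
        ≤ ∫ s in (0:ℝ)..(t/2), 4 * (1+t) ^ (-(3:ℝ)/2) * (1+s) ^ (-δ) := hmono
      _ = 4 * (1+t) ^ (-(3:ℝ)/2) * ∫ s in (0:ℝ)..(t/2), (1+s) ^ (-δ) := by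
            rw [intervalIntegral.integral_const_mul]
      _ ≤ 4 * (1+t) ^ (-(3:ℝ)/2) * ((1+t) ^ (1-δ) / (1-δ)) := by
            apply mul_le_mul_of_nonneg_left hJle (by positivity)
      _ = (4/(1-δ)) * (1+t) ^ (-(1:ℝ)/2 - δ) := by
            rw [show (4:ℝ) * (1+t) ^ (-(3:ℝ)/2) * ((1+t) ^ (1-δ) / (1-δ)) =
              (4/(1-δ)) * ((1+t) ^ (-(3:ℝ)/2) * (1+t) ^ (1-δ)) by ring,
              ← Real.rpow_add ht1, show (-(3:ℝ)/2 + (1-δ)) = -(1:ℝ)/2 - δ by ring]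
  -- Piece 2
  have hg2i : IntervalIntegrable
      (fun s : ℝ => 4 * (δ-1/2) * (1+t) ^ (-(1:ℝ)-δ) * (1+t-s) ^ (-(1:ℝ)/2))
      volume (t/2) t := by
    apply ContinuousOn.intervalIntegrable
    exact ContinuousOn.mul continuousOn_const
      (contOn_sub_rpow (1+t) _ _ (fun x hx => by have := (hsub2 hx).2; linarith))
  have key2 : ∫ s in (t/2)..t, f s ≤ 8 * (1+t) ^ (-(1:ℝ)/2 - δ) := by
    have hδ0 : (0:ℝ) ≤ δ - 1/2 := by linarith
    have hmono : ∫ s in (t/2)..t, f s ≤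
        ∫ s in (t/2)..t, 4 * (δ-1/2) * (1+t) ^ (-(1:ℝ)-δ) * (1+t-s) ^ (-(1:ℝ)/2) := by
      apply intervalIntegral.integral_mono_on (by linarith) hI2 hg2i
      intro x hx
      have hxl : t/2 ≤ x := hx.1
      have hx0 : (0:ℝ) ≤ x := by linarith
      have hxt : x ≤ t := hx.2
      have hx1 : (0:ℝ) < 1 + x := by linarith
      have htx : (0:ℝ) < 1 + t - x := by linarith
      have hD := mvt_bound δ hδ1 hx0 hxt
      have hApos : (0:ℝ) ≤ (1+t-x) ^ (-(3:ℝ)/2) := Real.rpow_nonneg htx.le _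
      have hEpos : (0:ℝ) ≤ (1+x) ^ (-(1:ℝ)/2) := Real.rpow_nonneg hx1.le _
      have step1 : (1+t-x) ^ (-(3:ℝ)/2) *
            ((1+x) ^ ((1:ℝ)/2-δ) - (1+t) ^ ((1:ℝ)/2-δ)) * (1+x) ^ (-(1:ℝ)/2) ≤
          (1+t-x) ^ (-(3:ℝ)/2) *
            ((δ-1/2) * (t-x) * (1+x) ^ (-(1:ℝ)/2-δ)) * (1+x) ^ (-(1:ℝ)/2) := by
        apply mul_le_mul_of_nonneg_right _ hEpos
        exact mul_le_mul_of_nonneg_left hD hApos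
      have step2 : (1+t-x) ^ (-(3:ℝ)/2) * ((δ-1/2) * (t-x) * (1+x) ^ (-(1:ℝ)/2-δ)) *
          (1+x) ^ (-(1:ℝ)/2) =
          (δ-1/2) * ((t-x) * (1+t-x) ^ (-(3:ℝ)/2)) * (1+x) ^ (-(1:ℝ)-δ) := by
        rw [show (-(1:ℝ)-δ) = (-(1:ℝ)/2-δ) + (-(1:ℝ)/2) by ring, Real.rpow_add hx1]
        ring
      have step3 : (t-x) * (1+t-x) ^ (-(3:ℝ)/2) ≤ (1+t-x) ^ (-(1:ℝ)/2) := by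
        have h1 : (t-x) * (1+t-x) ^ (-(3:ℝ)/2) ≤ (1+t-x) * (1+t-x) ^ (-(3:ℝ)/2) := by
          apply mul_le_mul_of_nonneg_right (by linarith) hApos
        have h2 : (1+t-x) * (1+t-x) ^ (-(3:ℝ)/2) = (1+t-x) ^ (-(1:ℝ)/2) := by
          nth_rewrite 1 [← Real.rpow_one (1+t-x)]
          rw [← Real.rpow_add htx, show ((1:ℝ) + -(3:ℝ)/2) = -(1:ℝ)/2 by ring]
        linarith
      have step4 : (1+x) ^ (-(1:ℝ)-δ) ≤ 4 * (1+t) ^ (-(1:ℝ)-δ) :=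
        half_bound ht1 (by linarith) (by linarith) (by linarith)
      have step5 : (δ-1/2) * ((t-x) * (1+t-x) ^ (-(3:ℝ)/2)) * (1+x) ^ (-(1:ℝ)-δ) ≤
          (δ-1/2) * (1+t-x) ^ (-(1:ℝ)/2) * (4 * (1+t) ^ (-(1:ℝ)-δ)) := by
        apply mul_le_mul (mul_le_mul_of_nonneg_left step3 hδ0) step4
          (Real.rpow_nonneg hx1.le _)
          (mul_nonneg hδ0 (Real.rpow_nonneg htx.le _))
      simp only [hf]
      calc (1+t-x) ^ (-(3:ℝ)/2) *
            ((1+x) ^ ((1:ℝ)/2-δ) - (1+t) ^ ((1:ℝ)/2-δ)) * (1+x) ^ (-(1:ℝ)/2)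
          ≤ (δ-1/2) * ((t-x) * (1+t-x) ^ (-(3:ℝ)/2)) * (1+x) ^ (-(1:ℝ)-δ) := by
            rw [← step2]; exact step1
        _ ≤ (δ-1/2) * (1+t-x) ^ (-(1:ℝ)/2) * (4 * (1+t) ^ (-(1:ℝ)-δ)) := step5
        _ = 4 * (δ-1/2) * (1+t) ^ (-(1:ℝ)-δ) * (1+t-x) ^ (-(1:ℝ)/2) := by ring
    have hK : ∫ s in (t/2)..t, (1+t-s) ^ (-(1:ℝ)/2) = 2 * (1+t/2) ^ ((1:ℝ)/2) - 2 := by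
      have hd : ∀ x ∈ uIcc (t/2) t, HasDerivAt (fun y => -2 * (1+t-y) ^ ((1:ℝ)/2))
          ((1+t-x) ^ (-(1:ℝ)/2)) x := by
        intro x hx
        have htx : (0:ℝ) < 1 + t - x := by have := (hsub2 hx).2; linarith
        have hder := (hasDerivAt_sub_rpow ((1:ℝ)/2) (1+t) x htx).const_mul (-2 : ℝ)
        have heq : (-2 : ℝ) * -((1:ℝ)/2 * (1+t-x) ^ ((1:ℝ)/2-1)) = (1+t-x) ^ (-(1:ℝ)/2) := by
          rw [show ((1:ℝ)/2-1 : ℝ) = -(1:ℝ)/2 by norm_num]; ring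
        rw [heq] at hder; exact hder
      have hint : IntervalIntegrable (fun s : ℝ => (1+t-s) ^ (-(1:ℝ)/2)) volume (t/2) t := by
        apply ContinuousOn.intervalIntegrable
        exact contOn_sub_rpow (1+t) _ _ (fun x hx => by have := (hsub2 hx).2; linarith)
      rw [intervalIntegral.integral_eq_sub_of_hasDerivAt hd hint]
      rw [show (1 + t - t : ℝ) = 1 by ring, Real.one_rpow]
      ring
    have hKle : ∫ s in (t/2)..t, (1+t-s) ^ (-(1:ℝ)/2) ≤ 2 * (1+t) ^ ((1:ℝ)/2) := by
      rw [hK]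
      have h1 : (1+t/2 : ℝ) ^ ((1:ℝ)/2) ≤ (1+t) ^ ((1:ℝ)/2) :=
        Real.rpow_le_rpow (by linarith) (by linarith) (by norm_num)
      linarith
    calc ∫ s in (t/2)..t, f s
        ≤ ∫ s in (t/2)..t, 4 * (δ-1/2) * (1+t) ^ (-(1:ℝ)-δ) * (1+t-s) ^ (-(1:ℝ)/2) := hmono
      _ = 4 * (δ-1/2) * (1+t) ^ (-(1:ℝ)-δ) * ∫ s in (t/2)..t, (1+t-s) ^ (-(1:ℝ)/2) := by
            rw [intervalIntegral.integral_const_mul]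
      _ ≤ 4 * (δ-1/2) * (1+t) ^ (-(1:ℝ)-δ) * (2 * (1+t) ^ ((1:ℝ)/2)) := by
            apply mul_le_mul_of_nonneg_left hKle
            exact mul_nonneg (by linarith) (Real.rpow_nonneg ht1.le _)
      _ = 8 * (δ-1/2) * ((1+t) ^ (-(1:ℝ)-δ) * (1+t) ^ ((1:ℝ)/2)) := by ring
      _ = 8 * (δ-1/2) * (1+t) ^ (-(1:ℝ)/2 - δ) := by
            rw [← Real.rpow_add ht1, show (-(1:ℝ)-δ + (1:ℝ)/2) = -(1:ℝ)/2 - δ by ring]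
      _ ≤ 8 * (1+t) ^ (-(1:ℝ)/2 - δ) := by
            have h0 : (0:ℝ) ≤ (1+t) ^ (-(1:ℝ)/2-δ) := Real.rpow_nonneg ht1.le _
            nlinarith
  rw [hsplit]
  calc (∫ s in (0:ℝ)..(t/2), f s) + ∫ s in (t/2)..t, f s
      ≤ (4/(1-δ)) * (1+t) ^ (-(1:ℝ)/2 - δ) + 8 * (1+t) ^ (-(1:ℝ)/2 - δ) :=
        add_le_add key1 key2
    _ = (4/(1-δ) + 8) * (1+t) ^ (-(1:ℝ)/2 - δ) := by ring
end

section
/- For every real δ with 1/2 < δ < 1, Ω(δ) = 1/(π·δ·(2δ−1)) + (1/(2√π)) · ( 2·Γ(1/2−δ)/Γ(1−δ) − Γ(−δ)/Γ(3/2−δ) ), where Γ denotes the Gamma function (note that for 1/2 < δ < 1 none of the arguments 1/2−δ, 1−δ, −δ, 3/2−δ is a nonpositive integer, so all Gamma values are well defined and the denominators are nonzero). -/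
open MeasureTheory

/-- The function Ω from the paper: for δ < 1, δ ≠ 1/2,
`Ω(δ) = (1/π) ∫₀¹ (1/(1+√(1−r))) (1−r)^(−1/2) ((1/(1−2δ))(r^(−1/2) − r^(−δ)) + r^(1/2−δ)) dr`. -/
noncomputable def Omega (δ : ℝ) : ℝ :=
  (1 / Real.pi) *
    ∫ r in Set.Ioo (0:ℝ) 1,
      (1 / (1 + Real.sqrt (1 - r))) * (1 - r) ^ (-(1:ℝ)/2) *
        ((1 / (1 - 2*δ)) * (r ^ (-(1:ℝ)/2) - r ^ (-δ)) + r ^ ((1:ℝ)/2 - δ))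

section OmegaAux

open Set Real

-- integrability lemma
lemma integrableOn_aux (p q : ℝ) (hp : -1 < p) :
    IntegrableOn (fun s : ℝ => (1-s)^p * (1+s)^q) (Set.Icc 0 1) := by
  have h1 : IntervalIntegrable (fun x : ℝ => x ^ p) volume 0 1 :=
    intervalIntegral.intervalIntegrable_rpow' hp
  have h2 : IntervalIntegrable (fun x : ℝ => (1 - x) ^ p) volume 0 1 := by
    have := h1.comp_sub_left 1
    simpa using this.symm
  have h3 : IntegrableOn (fun x : ℝ => (1 - x) ^ p) (Set.Icc 0 1) := by
    rw [integrableOn_Icc_iff_integrableOn_Ioc]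
    exact (intervalIntegrable_iff_integrableOn_Ioc_of_le (by norm_num)).mp h2
  have hcont : ContinuousOn (fun s : ℝ => (1+s)^q) (Set.Icc 0 1) := by
    apply ContinuousOn.rpow_const (by fun_prop)
    intro x hx
    left
    nlinarith [hx.1]
  have := h3.continuousOn_mul hcont isCompact_Icc
  apply this.congr_fun ?_ measurableSet_Icc
  intro x _; ring

lemma ftc_one (c : ℝ) (hc : c < 1) :
    ∫ s in (0:ℝ)..1, (1-s)^(-c) * (1+s)^(-c-1) * (1 + (1-2*c)*s) = 1 := by
  have key : ∫ s in (0:ℝ)..1, (1-s)^(-c) * (1+s)^(-c-1) * (1 + (1-2*c)*s)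
      = (fun s : ℝ => -((1-s)^(1-c) * (1+s)^(-c))) 1 -
        (fun s : ℝ => -((1-s)^(1-c) * (1+s)^(-c))) 0 := by
    refine intervalIntegral.integral_eq_sub_of_hasDeriv_right_of_le (a := 0) (b := 1)
      (f := fun s : ℝ => -((1-s)^(1-c) * (1+s)^(-c)))
      (f' := fun s : ℝ => (1-s)^(-c) * (1+s)^(-c-1) * (1 + (1-2*c)*s)) (by norm_num) ?_ ?_ ?_
    · apply ContinuousOn.neg
      apply ContinuousOn.mul
      · apply ContinuousOn.rpow_const (by fun_prop)
        intro x _; right; linarith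
      · apply ContinuousOn.rpow_const (by fun_prop)
        intro x hx; left; nlinarith [hx.1]
    · intro x hx
      have hx0 : (0:ℝ) < 1 - x := by linarith [hx.2]
      have hx1 : (0:ℝ) < 1 + x := by linarith [hx.1]
      have d1 : HasDerivAt (fun s : ℝ => (1-s)^(1-c)) (-1 * (1-c) * (1-x)^(-c)) x := by
        have hb : HasDerivAt (fun s : ℝ => 1 - s) (-1) x := by
          simpa using (hasDerivAt_id x).const_sub 1
        have := hb.rpow_const (p := 1-c) (Or.inl hx0.ne')
        rwa [show (1:ℝ)-c-1 = -c by ring] at this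
      have d2 : HasDerivAt (fun s : ℝ => (1+s)^(-c)) (1 * (-c) * (1+x)^(-c-1)) x := by
        have hb : HasDerivAt (fun s : ℝ => 1 + s) 1 x := by
          simpa using (hasDerivAt_id x).const_add 1
        have := hb.rpow_const (p := -c) (Or.inl hx1.ne')
        rwa [show -c-1 = -c-1 by ring] at this
      have := (d1.mul d2).neg
      apply HasDerivAt.hasDerivWithinAt
      convert this using 1
      · rfl
      have e1 : (1-x)^(1-c) = (1-x)^(-c) * (1-x) := by
        rw [← Real.rpow_add_one hx0.ne']; ring_nf
      have e2 : (1+x)^(-c) = (1+x)^(-c-1) * (1+x) := by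
        rw [← Real.rpow_add_one hx1.ne']; ring_nf
      rw [e1, e2]; ring
    · -- integrability
      have h := (integrableOn_aux (-c) (-c-1) (by linarith)).continuousOn_mul
        (g := fun s : ℝ => 1 + (1-2*c)*s) (by fun_prop) isCompact_Icc
      rw [intervalIntegrable_iff_integrableOn_Ioc_of_le (by norm_num)]
      apply (h.mono_set Ioc_subset_Icc_self).congr_fun ?_ measurableSet_Ioc
      intro x _; ring
  rw [key]
  norm_num [Real.zero_rpow (show (1:ℝ)-c ≠ 0 by linarith), Real.one_rpow]

lemma betaReal (a b : ℝ) (ha : 0 < a) (hb : 0 < b) :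
    ∫ s in Set.Ioo (0:ℝ) 1, s^(a-1) * (1-s)^(b-1)
      = Real.Gamma a * Real.Gamma b / Real.Gamma (a+b) := by
  have hC := Complex.Gamma_mul_Gamma_eq_betaIntegral (s := (a:ℂ)) (t := (b:ℂ))
    (by simpa using ha) (by simpa using hb)
  have hcoe : Complex.betaIntegral a b
      = ((∫ s in (0:ℝ)..1, s^(a-1) * (1-s)^(b-1) : ℝ) : ℂ) := by
    rw [Complex.betaIntegral, ← intervalIntegral.integral_ofReal]
    apply intervalIntegral.integral_congr
    intro x hx
    rw [Set.uIcc_of_le (by norm_num)] at hx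
    push_cast
    rw [Complex.ofReal_cpow hx.1 (a-1),
      Complex.ofReal_cpow (by linarith [hx.2] : (0:ℝ) ≤ 1 - x) (b-1)]
    push_cast
    ring
  rw [hcoe, ← Complex.ofReal_add, Complex.Gamma_ofReal, Complex.Gamma_ofReal,
    Complex.Gamma_ofReal, ← Complex.ofReal_mul, ← Complex.ofReal_mul] at hC
  have hR : Real.Gamma a * Real.Gamma b
      = Real.Gamma (a+b) * ∫ s in (0:ℝ)..1, s^(a-1) * (1-s)^(b-1) :=
    Complex.ofReal_injective hC
  have hG : Real.Gamma (a+b) ≠ 0 := (Real.Gamma_pos_of_pos (by linarith)).ne'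
  rw [← integral_Ioc_eq_integral_Ioo, ← intervalIntegral.integral_of_le (by norm_num)]
  field_simp
  linarith [hR]

lemma sq_image : (fun x : ℝ => x^2) '' Set.Ioo 0 1 = Set.Ioo 0 1 := by
  ext t
  constructor
  · rintro ⟨x, hx, rfl⟩
    exact ⟨pow_pos hx.1 2, pow_lt_one₀ hx.1.le hx.2 (by norm_num)⟩
  · rintro ht
    exact ⟨Real.sqrt t, ⟨Real.sqrt_pos.mpr ht.1, by
      rw [show (1:ℝ) = Real.sqrt 1 by simp]
      exact Real.sqrt_lt_sqrt ht.1.le ht.2⟩, Real.sq_sqrt ht.1.le⟩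

lemma one_sub_sq_image : (fun x : ℝ => 1 - x^2) '' Set.Ioo 0 1 = Set.Ioo 0 1 := by
  have : (fun x : ℝ => 1 - x^2) '' Set.Ioo 0 1 = (fun t : ℝ => 1 - t) '' ((fun x : ℝ => x^2) '' Set.Ioo 0 1) := by
    rw [Set.image_image]
  rw [this, sq_image]
  ext t
  constructor
  · rintro ⟨x, hx, rfl⟩
    simp only [Set.mem_Ioo] at hx ⊢
    constructor <;> linarith
  · rintro ht
    refine ⟨1 - t, ?_, by ring⟩
    simp only [Set.mem_Ioo]
    constructor <;> linarith [ht.1, ht.2]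

lemma sq_injOn : Set.InjOn (fun x : ℝ => x^2) (Set.Ioo 0 1) := by
  intro x hx y hy h
  have := Real.sqrt_sq hx.1.le
  have := Real.sqrt_sq hy.1.le
  simp only at h
  rw [← Real.sqrt_sq hx.1.le, ← Real.sqrt_sq hy.1.le, h]

lemma sq_int (p : ℝ) (hp : -1 < p) :
    ∫ s in Set.Ioo (0:ℝ) 1, (1-s^2)^p
      = Real.Gamma (1/2) * Real.Gamma (p+1) / Real.Gamma (p+3/2) / 2 := by
  have hderiv : ∀ x ∈ Set.Ioo (0:ℝ) 1,
      HasDerivWithinAt (fun x : ℝ => x^2) (2*x) (Set.Ioo 0 1) x := by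
    intro x _
    simpa using (hasDerivAt_pow 2 x).hasDerivWithinAt
  have key := integral_image_eq_integral_abs_deriv_smul measurableSet_Ioo hderiv sq_injOn
    (fun t : ℝ => 1/2 * t^(-(1:ℝ)/2) * (1-t)^p)
  rw [sq_image] at key
  have hpt : ∀ x ∈ Set.Ioo (0:ℝ) 1,
      |2*x| • (1/2 * (x^2)^(-(1:ℝ)/2) * (1-x^2)^p) = (1-x^2)^p := by
    intro x hx
    have hx0 := hx.1
    have h1 : (x^2 : ℝ)^(-(1:ℝ)/2) = x⁻¹ := by
      rw [← Real.rpow_natCast x 2, ← Real.rpow_mul hx0.le]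
      norm_num [Real.rpow_neg_one]
    rw [abs_of_pos (by linarith), h1, smul_eq_mul]
    field_simp
  rw [setIntegral_congr_fun measurableSet_Ioo hpt] at key
  rw [← key]
  have hbeta := betaReal (1/2) (p+1) (by norm_num) (by linarith)
  rw [show (1:ℝ)/2 + (p+1) = p + 3/2 by ring] at hbeta
  have step : ∫ x in Set.Ioo (0:ℝ) 1, 1/2 * x^(-(1:ℝ)/2) * (1-x)^p
      = 1/2 * ∫ s in Set.Ioo (0:ℝ) 1, s^((1:ℝ)/2-1) * (1-s)^(p+1-1) := by
    rw [← integral_const_mul]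
    apply setIntegral_congr_fun measurableSet_Ioo
    intro t _
    rw [show (1:ℝ)/2 - 1 = -(1:ℝ)/2 by norm_num, show p + 1 - 1 = p by ring]
    ring
  rw [step, hbeta]
  ring
lemma Tval (c : ℝ) (hc0 : 0 < c) (hc : c < 1) :
    ∫ x in Set.Ioo (0:ℝ) 1, (1-x)^(-c) * (1+x)^(-c-1)
      = (1 - (1-2*c) * (Real.Gamma (1/2) * Real.Gamma (1-c) / Real.Gamma (3/2-c) / 2)) / (2*c) := by
  set E : ℝ := Real.Gamma (1/2) * Real.Gamma (1-c) / Real.Gamma (3/2-c) / 2 with hEdef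
  -- E is the integral of the product form
  have hE : ∫ x in Set.Ioo (0:ℝ) 1, (1-x)^(-c) * (1+x)^(-c) = E := by
    have h := sq_int (-c) (by linarith)
    rw [show -c + 1 = 1 - c by ring, show -c + 3/2 = 3/2 - c by ring] at h
    rw [hEdef, ← h]
    apply setIntegral_congr_fun measurableSet_Ioo
    intro x hx
    simp only
    rw [show (1:ℝ) - x^2 = (1-x)*(1+x) by ring,
      Real.mul_rpow (by linarith [hx.2]) (by linarith [hx.1])]
  -- FTC value
  have hV : ∫ x in Set.Ioo (0:ℝ) 1, (1-x)^(-c) * (1+x)^(-c-1) * (1 + (1-2*c)*x) = 1 := by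
    have h := ftc_one c hc
    rwa [intervalIntegral.integral_of_le (by norm_num), integral_Ioc_eq_integral_Ioo] at h
  -- integrabilities
  have hT : IntegrableOn (fun x : ℝ => (1-x)^(-c) * (1+x)^(-c-1)) (Set.Ioo 0 1) :=
    (integrableOn_aux (-c) (-c-1) (by linarith)).mono_set Set.Ioo_subset_Icc_self
  have hP : IntegrableOn (fun x : ℝ => (1-x)^(-c) * (1+x)^(-c)) (Set.Ioo 0 1) :=
    (integrableOn_aux (-c) (-c) (by linarith)).mono_set Set.Ioo_subset_Icc_self
  -- pointwise expansion
  have hpt : ∀ x ∈ Set.Ioo (0:ℝ) 1,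
      (1-x)^(-c) * (1+x)^(-c-1) * (1 + (1-2*c)*x)
        = (1-x)^(-c) * (1+x)^(-c-1)
          + (1-2*c) * ((1-x)^(-c) * (1+x)^(-c) - (1-x)^(-c) * (1+x)^(-c-1)) := by
    intro x hx
    have h1 : (0:ℝ) < 1 + x := by linarith [hx.1]
    have e : (1+x)^(-c) = (1+x)^(-c-1) * (1+x) := by
      rw [← Real.rpow_add_one h1.ne']; ring_nf
    rw [e]; ring
  rw [setIntegral_congr_fun measurableSet_Ioo hpt] at hV
  have hsub : IntegrableOn
      (fun x : ℝ => (1-x)^(-c) * (1+x)^(-c) - (1-x)^(-c) * (1+x)^(-c-1)) (Set.Ioo 0 1) :=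
    hP.sub hT
  rw [integral_add hT (hsub.const_mul (1-2*c)), integral_const_mul,
    integral_sub hP hT, hE] at hV
  have h2c : (2*c : ℝ) ≠ 0 := by positivity
  field_simp
  linarith [hV]

lemma final_algebra (δ P G2 G4 : ℝ) (hδ1 : 1/2 < δ) (hδ2 : δ < 1)
    (hP : P ≠ 0) (hG2 : G2 ≠ 0) (hG4 : G4 ≠ 0) :
    (1/(P*P)) * (1/(1-2*δ) * (2*1 - 2*((1 - (1-2*δ)*(P*G2/G4/2))/(2*δ)))
      + 2*((1 - (1-2*(δ-1/2))*(P*G4/((1-δ)*G2)/2))/(2*(δ-1/2))))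
    = 1/((P*P)*δ*(2*δ-1)) + 1/(2*P)*(2*(G4/(1/2-δ))/G2 - G2/(-δ)/G4) := by
  have hδ0 : (0:ℝ) < δ := by linarith
  have h1δ : (1:ℝ) - δ ≠ 0 := by linarith
  have h12δ' : (1:ℝ)/2 - δ ≠ 0 := by linarith
  have h2δ1 : (2:ℝ)*δ - 1 ≠ 0 := by linarith
  have hδ12 : (δ:ℝ) - 1/2 ≠ 0 := by linarith
  have h12δ : (1:ℝ) - 2*δ ≠ 0 := by linarith
  have esimp : (1-2*(δ-1/2))*(P*G4/((1-δ)*G2)/2) = P*G4/G2 := by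
    field_simp
    ring
  rw [esimp]
  have hx : δ*G2*2 - G2 ≠ 0 := by
    have e : δ*G2*2 - G2 = G2*(2*δ-1) := by ring
    rw [e]; exact mul_ne_zero hG2 h2δ1
  have hy : G2*(δ*2-1) ≠ 0 := mul_ne_zero hG2 (by linarith)
  field_simp [hx, hy]
  ring

end OmegaAux

set_option maxHeartbeats 1000000 in
theorem Omega_eq_gamma (δ : ℝ) (hδ1 : 1/2 < δ) (hδ2 : δ < 1) :
    Omega δ =
      1 / (Real.pi * δ * (2*δ - 1)) +
        (1 / (2 * Real.sqrt Real.pi)) *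
          (2 * Real.Gamma (1/2 - δ) / Real.Gamma (1 - δ) -
            Real.Gamma (-δ) / Real.Gamma (3/2 - δ)) := by
  have hδ0 : (0:ℝ) < δ := by linarith
  have h12δ : (1 - 2*δ : ℝ) ≠ 0 := by linarith
  -- Step A: substitution r = 1 - x²
  have hderiv : ∀ x ∈ Set.Ioo (0:ℝ) 1,
      HasDerivWithinAt (fun x : ℝ => 1 - x^2) (-(2*x)) (Set.Ioo 0 1) x := by
    intro x _
    have := ((hasDerivAt_pow 2 x).const_sub 1).hasDerivWithinAt (s := Set.Ioo (0:ℝ) 1)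
    simpa using this
  have hinj : Set.InjOn (fun x : ℝ => 1 - x^2) (Set.Ioo 0 1) := by
    intro x hx y hy h
    simp only at h
    exact sq_injOn hx hy (by dsimp only; linarith)
  have key := integral_image_eq_integral_abs_deriv_smul measurableSet_Ioo hderiv hinj
    (fun r : ℝ => (1 / (1 + Real.sqrt (1 - r))) * (1 - r) ^ (-(1:ℝ)/2) *
        ((1 / (1 - 2*δ)) * (r ^ (-(1:ℝ)/2) - r ^ (-δ)) + r ^ ((1:ℝ)/2 - δ)))
  rw [one_sub_sq_image] at key
  -- Step B: pointwise identity
  have hpt : ∀ x ∈ Set.Ioo (0:ℝ) 1,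
      |(-(2*x))| • ((1 / (1 + Real.sqrt (1 - (1 - x^2)))) * (1 - (1 - x^2)) ^ (-(1:ℝ)/2) *
        ((1 / (1 - 2*δ)) * ((1 - x^2) ^ (-(1:ℝ)/2) - (1 - x^2) ^ (-δ)) + (1 - x^2) ^ ((1:ℝ)/2 - δ)))
      = (1/(1-2*δ)) * (2 * ((1-x)^(-(1/2:ℝ)) * (1+x)^(-(1/2:ℝ)-1))
            - 2 * ((1-x)^(-δ) * (1+x)^(-δ-1)))
          + 2 * ((1-x)^(-(δ-1/2)) * (1+x)^(-(δ-1/2)-1)) := by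
    intro x hx
    have hx0 : (0:ℝ) < x := hx.1
    have h1m : (0:ℝ) < 1 - x := by linarith [hx.2]
    have h1p : (0:ℝ) < 1 + x := by linarith
    have e0 : (1:ℝ) - (1 - x^2) = x^2 := by ring
    rw [e0, Real.sqrt_sq hx0.le, smul_eq_mul, abs_neg, abs_of_pos (by positivity)]
    have e1 : ((x:ℝ)^2)^(-(1:ℝ)/2) = x⁻¹ := by
      rw [← Real.rpow_natCast x 2, ← Real.rpow_mul hx0.le]
      norm_num [Real.rpow_neg_one]
    rw [e1]
    have fact : ∀ a : ℝ, ((1:ℝ)-x^2)^a = (1-x)^a * (1+x)^a := by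
      intro a
      rw [show (1:ℝ) - x^2 = (1-x)*(1+x) by ring, Real.mul_rpow h1m.le h1p.le]
    rw [fact (-(1:ℝ)/2), fact (-δ), fact ((1:ℝ)/2 - δ)]
    have ea : ∀ a : ℝ, (1+x)^(a-(1:ℝ)) = (1+x)^a / (1+x) := by
      intro a
      rw [Real.rpow_sub h1p, Real.rpow_one]
    rw [ea (-(1/2:ℝ)), ea (-δ), ea (-(δ-1/2))]
    rw [show -(1:ℝ)/2 = -(1/2:ℝ) by norm_num, show (1:ℝ)/2 - δ = -(δ-1/2) by ring]
    field_simp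
  rw [setIntegral_congr_fun measurableSet_Ioo hpt] at key
  -- Step C: split integral
  have hT1 : IntegrableOn (fun x : ℝ => (1-x)^(-(1/2:ℝ)) * (1+x)^(-(1/2:ℝ)-1)) (Set.Ioo 0 1) :=
    (integrableOn_aux (-(1/2:ℝ)) (-(1/2:ℝ)-1) (by norm_num)).mono_set Set.Ioo_subset_Icc_self
  have hT2 : IntegrableOn (fun x : ℝ => (1-x)^(-δ) * (1+x)^(-δ-1)) (Set.Ioo 0 1) :=
    (integrableOn_aux (-δ) (-δ-1) (by linarith)).mono_set Set.Ioo_subset_Icc_self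
  have hT3 : IntegrableOn (fun x : ℝ => (1-x)^(-(δ-1/2)) * (1+x)^(-(δ-1/2)-1)) (Set.Ioo 0 1) :=
    (integrableOn_aux (-(δ-1/2)) (-(δ-1/2)-1) (by linarith)).mono_set Set.Ioo_subset_Icc_self
  have h12 : IntegrableOn (fun x : ℝ => 2 * ((1-x)^(-(1/2:ℝ)) * (1+x)^(-(1/2:ℝ)-1))
      - 2 * ((1-x)^(-δ) * (1+x)^(-δ-1))) (Set.Ioo 0 1) :=
    (hT1.const_mul 2).sub (hT2.const_mul 2)
  rw [integral_add (h12.const_mul (1/(1-2*δ))) (hT3.const_mul 2), integral_const_mul,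
    integral_const_mul, integral_sub (hT1.const_mul 2) (hT2.const_mul 2),
    integral_const_mul, integral_const_mul] at key
  -- Step D: values
  have hA := Tval (1/2) (by norm_num) (by norm_num)
  have hB := Tval δ hδ0 hδ2
  have hC := Tval (δ-1/2) (by linarith) (by linarith)
  rw [show (1:ℝ) - 2*(1/2) = 0 by norm_num, zero_mul, sub_zero,
    show ((1:ℝ))/(2*(1/2)) = 1 by norm_num] at hA
  rw [show (1:ℝ) - (δ - 1/2) = 3/2 - δ by ring, show (3:ℝ)/2 - (δ-1/2) = 2 - δ by ring] at hC
  rw [hA, hB, hC] at key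
  -- Final algebra
  unfold Omega
  rw [key]
  have hππ : Real.sqrt Real.pi * Real.sqrt Real.pi = Real.pi :=
    Real.mul_self_sqrt Real.pi_pos.le
  have hsπ : Real.sqrt Real.pi ≠ 0 := by positivity
  have hG1 : Real.Gamma (2-δ) = (1-δ) * Real.Gamma (1-δ) := by
    rw [show (2:ℝ)-δ = (1-δ)+1 by ring, Real.Gamma_add_one (by linarith)]
  have hG2pos : (0:ℝ) < Real.Gamma (1-δ) := Real.Gamma_pos_of_pos (by linarith)
  have hG4pos : (0:ℝ) < Real.Gamma (3/2-δ) := Real.Gamma_pos_of_pos (by linarith)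
  have hG3 : Real.Gamma (-δ) = Real.Gamma (1-δ) / (-δ) := by
    rw [show (1:ℝ)-δ = -δ+1 by ring, Real.Gamma_add_one (by linarith)]
    field_simp
  have hG1' : Real.Gamma (1/2-δ) = Real.Gamma (3/2-δ) / (1/2-δ) := by
    rw [show (3:ℝ)/2-δ = (1/2-δ)+1 by ring, Real.Gamma_add_one (by linarith)]
    field_simp
  rw [hG3, hG1', hG1, Real.Gamma_one_half_eq,
    show (1:ℝ)/Real.pi = 1/(Real.sqrt Real.pi * Real.sqrt Real.pi) by rw [hππ],
    show (1:ℝ)/(Real.pi*δ*(2*δ-1))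
      = 1/((Real.sqrt Real.pi * Real.sqrt Real.pi)*δ*(2*δ-1)) by rw [hππ]]
  exact final_algebra δ (Real.sqrt Real.pi) (Real.Gamma (1-δ)) (Real.Gamma (3/2-δ))
    hδ1 hδ2 hsπ hG2pos.ne' hG4pos.ne'
end

section
/- Ω(0) = 1 − (log 4)/π; equivalently, (1/π) ∫₀¹ (1/(1+√(1−r))) · (1−r)^(−1/2) · ( r^(−1/2) − 1 + r^(1/2) ) dr = 1 − (log 4)/π. -/
open MeasureTheory

open Real Set Filter in
/-- integrand at δ = 0 -/
noncomputable def fOm (r : ℝ) : ℝ :=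
  (1 / (1 + Real.sqrt (1 - r))) * (1 - r) ^ (-(1:ℝ)/2) *
    (r ^ (-(1:ℝ)/2) - 1 + r ^ ((1:ℝ)/2))

/-- antiderivative -/
noncomputable def FOm (r : ℝ) : ℝ :=
  2 * Real.sqrt r / (1 + Real.sqrt (1 - r)) + 2 * Real.log (1 + Real.sqrt (1 - r))
    + 2 * Real.arcsin (Real.sqrt r) - 2 * Real.sqrt r

open Real Set Filter

lemma FOm_deriv {r : ℝ} (hr : r ∈ Ioo (0:ℝ) 1) : HasDerivAt FOm (fOm r) r := by
  obtain ⟨hr0, hr1⟩ := hr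
  set s := Real.sqrt r with hs_def
  set c := Real.sqrt (1 - r) with hc_def
  have hs : 0 < s := Real.sqrt_pos.2 hr0
  have hc : 0 < c := Real.sqrt_pos.2 (by linarith)
  have hs2 : s ^ 2 = r := Real.sq_sqrt hr0.le
  have hc2 : c ^ 2 = 1 - r := Real.sq_sqrt (by linarith)
  have hs1 : s < 1 := by nlinarith
  have hden : (0:ℝ) < 1 + c := by linarith
  have h1 : HasDerivAt Real.sqrt (1 / (2 * s)) r := Real.hasDerivAt_sqrt hr0.ne'
  have h2 : HasDerivAt (fun x : ℝ => 1 - x) (-1) r := by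
    simpa using (hasDerivAt_id r).const_sub 1
  have h3 : HasDerivAt (fun x : ℝ => Real.sqrt (1 - x)) (1 / (2 * c) * (-1)) r :=
    (Real.hasDerivAt_sqrt (by linarith : (1:ℝ) - r ≠ 0)).comp r h2
  have h4 : HasDerivAt (fun x : ℝ => 1 + Real.sqrt (1 - x)) (1 / (2 * c) * (-1)) r :=
    h3.const_add 1
  have h5 : HasDerivAt (fun x : ℝ => Real.log (1 + Real.sqrt (1 - x)))
      ((1 / (2 * c) * (-1)) / (1 + c)) r := h4.log hden.ne'
  have h6 : HasDerivAt (fun x : ℝ => Real.arcsin (Real.sqrt x))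
      (1 / Real.sqrt (1 - s ^ 2) * (1 / (2 * s))) r :=
    (Real.hasDerivAt_arcsin (by linarith) hs1.ne).comp r h1
  have h6' : HasDerivAt (fun x : ℝ => Real.arcsin (Real.sqrt x))
      (1 / c * (1 / (2 * s))) r := by
    rwa [hs2, ← hc_def] at h6
  have h7 : HasDerivAt (fun x : ℝ => 2 * Real.sqrt x) (2 * (1 / (2 * s))) r := h1.const_mul 2
  have h8 : HasDerivAt (fun x : ℝ => 2 * Real.sqrt x / (1 + Real.sqrt (1 - x)))
      ((2 * (1 / (2 * s)) * (1 + c) - 2 * s * (1 / (2 * c) * (-1))) / (1 + c) ^ 2) r :=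
    h7.div h4 hden.ne'
  have hD : HasDerivAt FOm
      ((2 * (1 / (2 * s)) * (1 + c) - 2 * s * (1 / (2 * c) * (-1))) / (1 + c) ^ 2
        + 2 * ((1 / (2 * c) * (-1)) / (1 + c)) + 2 * (1 / c * (1 / (2 * s)))
        - 2 * (1 / (2 * s))) r := by
    unfold FOm
    exact ((h8.add (h5.const_mul 2)).add (h6'.const_mul 2)).sub h7
  convert hD using 1
  have er : r ^ (-(1:ℝ)/2) = s⁻¹ := by
    rw [neg_div, Real.rpow_neg hr0.le, ← Real.sqrt_eq_rpow]
  have er' : r ^ ((1:ℝ)/2) = s := by rw [← Real.sqrt_eq_rpow]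
  have ec : (1 - r) ^ (-(1:ℝ)/2) = c⁻¹ := by
    rw [neg_div, Real.rpow_neg (by linarith), ← Real.sqrt_eq_rpow]
  unfold fOm
  rw [er, er', ec, ← hc_def]
  have hsc : s ^ 2 + c ^ 2 = 1 := by rw [hs2, hc2]; ring
  field_simp
  linear_combination c * hsc


lemma FOm_continuous : Continuous FOm := by
  have hden : ∀ x : ℝ, (0:ℝ) < 1 + Real.sqrt (1 - x) := fun x => by positivity
  have h1 : Continuous fun x : ℝ => 1 + Real.sqrt (1 - x) :=
    continuous_const.add (Real.continuous_sqrt.comp (continuous_const.sub continuous_id))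
  exact (((continuous_const.mul Real.continuous_sqrt).div h1
    fun x => (hden x).ne').add (continuous_const.mul (h1.log fun x => (hden x).ne'))).add
      (continuous_const.mul (Real.continuous_arcsin.comp Real.continuous_sqrt)) |>.sub
        (continuous_const.mul Real.continuous_sqrt)

lemma fOm_nonneg_bound {x : ℝ} (hx0 : 0 < x) (hx1 : x < 1) :
    0 ≤ fOm x ∧ fOm x ≤ 2 * ((1 - x) ^ (-(1:ℝ)/2) * x ^ (-(1:ℝ)/2)) := by
  have h1 : (0:ℝ) < 1 + Real.sqrt (1 - x) := by positivity
  have h2 : (0:ℝ) ≤ (1 - x) ^ (-(1:ℝ)/2) := Real.rpow_nonneg (by linarith) _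
  have h3 : (1:ℝ) ≤ x ^ (-(1:ℝ)/2) :=
    Real.one_le_rpow_of_pos_of_le_one_of_nonpos hx0 hx1.le (by norm_num)
  have h4 : x ^ ((1:ℝ)/2) ≤ 1 := Real.rpow_le_one hx0.le hx1.le (by norm_num)
  have h5 : (0:ℝ) ≤ x ^ ((1:ℝ)/2) := Real.rpow_nonneg hx0.le _
  constructor
  · unfold fOm
    have hnn : (0:ℝ) ≤ x ^ (-(1:ℝ)/2) - 1 + x ^ ((1:ℝ)/2) := by linarith
    apply mul_nonneg (mul_nonneg (by positivity) h2) hnn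
  · unfold fOm
    have hb : x ^ (-(1:ℝ)/2) - 1 + x ^ ((1:ℝ)/2) ≤ 2 * x ^ (-(1:ℝ)/2) := by linarith
    have hinv : 1 / (1 + Real.sqrt (1 - x)) ≤ 1 := by
      rw [div_le_one h1]
      have := Real.sqrt_nonneg (1 - x); linarith
    calc (1 / (1 + Real.sqrt (1 - x))) * (1 - x) ^ (-(1:ℝ)/2) *
          (x ^ (-(1:ℝ)/2) - 1 + x ^ ((1:ℝ)/2))
        ≤ 1 * (1 - x) ^ (-(1:ℝ)/2) * (2 * x ^ (-(1:ℝ)/2)) := by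
          apply mul_le_mul (mul_le_mul hinv le_rfl h2 zero_le_one) hb (by linarith)
          positivity
      _ = 2 * ((1 - x) ^ (-(1:ℝ)/2) * x ^ (-(1:ℝ)/2)) := by ring

lemma fOm_contOn : ContinuousOn fOm (Set.Ioo (0:ℝ) 1) := by
  intro x hx
  obtain ⟨hx0, hx1⟩ := hx
  apply ContinuousAt.continuousWithinAt
  have c1 : ContinuousAt (fun y : ℝ => 1 / (1 + Real.sqrt (1 - y))) x := by
    apply ContinuousAt.div continuousAt_const
    · exact (continuous_const.add (Real.continuous_sqrt.comp
        (continuous_const.sub continuous_id))).continuousAt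
    · positivity
  have c2 : ContinuousAt (fun y : ℝ => (1 - y) ^ (-(1:ℝ)/2)) x :=
    (Real.continuousAt_rpow_const (1 - x) _ (Or.inl (by linarith))).comp
      ((continuous_const.sub continuous_id).continuousAt)
  have c3 : ContinuousAt (fun y : ℝ => y ^ (-(1:ℝ)/2)) x :=
    Real.continuousAt_rpow_const x _ (Or.inl hx0.ne')
  have c4 : ContinuousAt (fun y : ℝ => y ^ ((1:ℝ)/2)) x :=
    Real.continuousAt_rpow_const x _ (Or.inl hx0.ne')
  exact (c1.mul c2).mul ((c3.sub continuousAt_const).add c4)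

lemma fOm_one : fOm 1 = 0 := by
  unfold fOm
  rw [show (1:ℝ) - 1 = 0 by norm_num, Real.zero_rpow (by norm_num)]
  ring

lemma two_bound : ∀ x : ℝ, 1/2 ≤ x → x ^ (-(1:ℝ)/2) ≤ (2:ℝ) ^ ((1:ℝ)/2) := by
  intro x hx
  have h2i : ((2:ℝ))⁻¹ ^ (-(1:ℝ)/2) = (2:ℝ) ^ ((1:ℝ)/2) := by
    rw [Real.inv_rpow (by norm_num), ← Real.rpow_neg (by norm_num)]
    norm_num
  calc x ^ (-(1:ℝ)/2) ≤ ((2:ℝ))⁻¹ ^ (-(1:ℝ)/2) :=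
        Real.rpow_le_rpow_of_nonpos (by norm_num) (by linarith) (by norm_num)
    _ = (2:ℝ) ^ ((1:ℝ)/2) := h2i

lemma fOm_intIntegrable : IntervalIntegrable fOm volume 0 1 := by
  have hhalf : ∀ x : ℝ, 0 < x → x ≤ 1 →
      |fOm x| ≤ (2:ℝ) * ((1 - x) ^ (-(1:ℝ)/2) * x ^ (-(1:ℝ)/2)) := by
    intro x hx0 hx1
    rcases eq_or_lt_of_le hx1 with h1 | h1
    · rw [h1, fOm_one, abs_zero]
      positivity
    · obtain ⟨h0, hle⟩ := fOm_nonneg_bound hx0 h1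
      rw [abs_of_nonneg h0]
      exact hle
  have i1 : IntervalIntegrable fOm volume 0 (1/2) := by
    apply IntervalIntegrable.mono_fun'
      (g := fun x => (2 * (2:ℝ) ^ ((1:ℝ)/2)) * x ^ (-(1:ℝ)/2))
    · exact (intervalIntegral.intervalIntegrable_rpow' (by norm_num)).const_mul _
    · rw [Set.uIoc_of_le (by norm_num : (0:ℝ) ≤ 1/2)]
      exact (fOm_contOn.mono (by
        intro y hy
        exact ⟨hy.1, by simpa using hy.2.trans_lt (by norm_num)⟩)).aestronglyMeasurable
          measurableSet_Ioc
    · rw [Set.uIoc_of_le (by norm_num : (0:ℝ) ≤ 1/2)]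
      refine (ae_restrict_iff' measurableSet_Ioc).2 (Filter.Eventually.of_forall ?_)
      intro x hx
      have hx0 : 0 < x := hx.1
      have hx2 : x ≤ 1/2 := hx.2
      refine (hhalf x hx0 (by linarith)).trans ?_
      have hxr : (0:ℝ) ≤ x ^ (-(1:ℝ)/2) := Real.rpow_nonneg hx0.le _
      have hb : (1 - x) ^ (-(1:ℝ)/2) ≤ (2:ℝ) ^ ((1:ℝ)/2) := two_bound _ (by linarith)
      calc 2 * ((1 - x) ^ (-(1:ℝ)/2) * x ^ (-(1:ℝ)/2))
          ≤ 2 * ((2:ℝ) ^ ((1:ℝ)/2) * x ^ (-(1:ℝ)/2)) := by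
            apply mul_le_mul_of_nonneg_left (mul_le_mul_of_nonneg_right hb hxr) (by norm_num)
        _ = (2 * (2:ℝ) ^ ((1:ℝ)/2)) * x ^ (-(1:ℝ)/2) := by ring
  have i2 : IntervalIntegrable fOm volume (1/2) 1 := by
    apply IntervalIntegrable.mono_fun'
      (g := fun x => (2 * (2:ℝ) ^ ((1:ℝ)/2)) * (1 - x) ^ (-(1:ℝ)/2))
    · have base : IntervalIntegrable (fun x : ℝ => x ^ (-(1:ℝ)/2)) volume 0 (1/2) :=
        intervalIntegral.intervalIntegrable_rpow' (by norm_num)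
      have h := ((base.comp_sub_left 1).symm.const_mul (2 * (2:ℝ) ^ ((1:ℝ)/2)))
      have e1 : (1:ℝ) - 1/2 = 1/2 := by norm_num
      have e2 : (1:ℝ) - 0 = 1 := by norm_num
      rw [e1, e2] at h
      exact h
    · rw [Set.uIoc_of_le (by norm_num : (1:ℝ)/2 ≤ 1),
        ← Measure.restrict_congr_set MeasureTheory.Ioo_ae_eq_Ioc]
      exact (fOm_contOn.mono (by
        intro y hy
        exact ⟨by linarith [hy.1], hy.2⟩)).aestronglyMeasurable measurableSet_Ioo
    · rw [Set.uIoc_of_le (by norm_num : (1:ℝ)/2 ≤ 1)]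
      refine (ae_restrict_iff' measurableSet_Ioc).2 (Filter.Eventually.of_forall ?_)
      intro x hx
      have hx0 : (1:ℝ)/2 < x := hx.1
      have hx2 : x ≤ 1 := hx.2
      refine (hhalf x (by linarith) hx2).trans ?_
      have hxr : (0:ℝ) ≤ (1 - x) ^ (-(1:ℝ)/2) := Real.rpow_nonneg (by linarith) _
      have hb : x ^ (-(1:ℝ)/2) ≤ (2:ℝ) ^ ((1:ℝ)/2) := two_bound _ hx0.le
      calc 2 * ((1 - x) ^ (-(1:ℝ)/2) * x ^ (-(1:ℝ)/2))
          ≤ 2 * ((1 - x) ^ (-(1:ℝ)/2) * (2:ℝ) ^ ((1:ℝ)/2)) := by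
            apply mul_le_mul_of_nonneg_left (mul_le_mul_of_nonneg_left hb hxr) (by norm_num)
        _ = (2 * (2:ℝ) ^ ((1:ℝ)/2)) * (1 - x) ^ (-(1:ℝ)/2) := by ring
  exact i1.trans i2

lemma fOm_integral : ∫ y in (0:ℝ)..1, fOm y = Real.pi - 2 * Real.log 2 := by
  have ha : Filter.Tendsto FOm (nhdsWithin 0 (Set.Ioi 0)) (nhds (2 * Real.log 2)) := by
    have h0 : FOm 0 = 2 * Real.log 2 := by
      unfold FOm
      simp [Real.sqrt_zero, Real.sqrt_one, Real.arcsin_zero]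
      norm_num
    rw [← h0]
    exact (FOm_continuous.tendsto 0).mono_left nhdsWithin_le_nhds
  have hb : Filter.Tendsto FOm (nhdsWithin 1 (Set.Iio 1)) (nhds Real.pi) := by
    have h1 : FOm 1 = Real.pi := by
      unfold FOm
      simp [Real.sqrt_zero, Real.sqrt_one, Real.arcsin_one]
      ring
    rw [← h1]
    exact (FOm_continuous.tendsto 1).mono_left nhdsWithin_le_nhds
  rw [intervalIntegral.integral_eq_sub_of_hasDerivAt_of_tendsto (by norm_num)
    (fun x hx => FOm_deriv hx) fOm_intIntegrable ha hb]

theorem Omega_zero : Omega 0 = 1 - Real.log 4 / Real.pi := by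
  have heq : ∀ r : ℝ,
      (1 / (1 + Real.sqrt (1 - r))) * (1 - r) ^ (-(1:ℝ)/2) *
        ((1 / (1 - 2*(0:ℝ))) * (r ^ (-(1:ℝ)/2) - r ^ (-(0:ℝ))) + r ^ ((1:ℝ)/2 - 0)) = fOm r := by
    intro r
    unfold fOm
    rw [neg_zero, Real.rpow_zero]
    norm_num
  unfold Omega
  simp only [heq]
  have hIoo : ∫ r in Set.Ioo (0:ℝ) 1, fOm r = ∫ y in (0:ℝ)..1, fOm y := by
    rw [intervalIntegral.integral_of_le (by norm_num : (0:ℝ) ≤ 1),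
      MeasureTheory.integral_Ioc_eq_integral_Ioo]
  rw [hIoo, fOm_integral]
  have h4 : Real.log 4 = 2 * Real.log 2 := by
    rw [show (4:ℝ) = 2 ^ (2:ℕ) by norm_num, Real.log_pow]
    norm_num
  rw [h4]
  field_simp [Real.pi_ne_zero]
end

section
/- The limit of Ω(δ) as δ tends to 1/2 (with δ ranging over real numbers in (0,1) different from 1/2) exists and equals 1 + (log 4 − 2)/π. -/
open MeasureTheory

open Set Real Filter



lemma abs_exp_sub_one_le' (x : ℝ) : |Real.exp x - 1| ≤ |x| * Real.exp |x| := by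
  rcases le_or_gt 0 x with hx | hx
  · rw [abs_of_nonneg hx, abs_of_nonneg (by linarith [Real.one_le_exp hx])]
    have hprod : Real.exp x * Real.exp (-x) = 1 := by rw [← Real.exp_add]; simp
    nlinarith [mul_le_mul_of_nonneg_left (Real.add_one_le_exp (-x)) (Real.exp_pos x).le, hprod]
  · have h1 : Real.exp x < 1 := Real.exp_lt_one_iff.mpr hx
    rw [abs_of_neg hx, abs_of_nonpos (by linarith)]
    nlinarith [Real.add_one_le_exp x, Real.exp_pos (-x), Real.one_le_exp (by linarith : (0:ℝ) ≤ -x)]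

lemma integrableOn_rpow_mul_one_sub_rpow {a b : ℝ} (ha : -1 < a) (hb : -1 < b) :
    IntegrableOn (fun r : ℝ => r ^ a * (1 - r) ^ b) (Set.Ioo (0:ℝ) 1) := by
  have key : ∀ (c x : ℝ), x ∈ Set.Icc (1/2 : ℝ) 1 → x ^ c ≤ 2 ^ |c| := by
    intro c x hx
    have hx0 : (0:ℝ) < x := lt_of_lt_of_le (by norm_num) hx.1
    rw [Real.rpow_def_of_pos hx0, Real.rpow_def_of_pos (by norm_num : (0:ℝ) < 2)]
    apply Real.exp_le_exp.mpr
    have h1 : |Real.log x| ≤ Real.log 2 := by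
      rw [abs_le]
      constructor
      · have := Real.log_le_log (by norm_num : (0:ℝ) < 1/2) hx.1
        rw [show (1/2:ℝ) = 2⁻¹ by norm_num, Real.log_inv] at this
        linarith
      · have := Real.log_le_log hx0 hx.2
        simp at this
        linarith [Real.log_nonneg (by norm_num : (1:ℝ) ≤ 2)]
    calc Real.log x * c ≤ |Real.log x * c| := le_abs_self _
      _ = |Real.log x| * |c| := abs_mul _ _
      _ ≤ Real.log 2 * |c| := by
          apply mul_le_mul_of_nonneg_right h1 (abs_nonneg c)
  have hsplit : Set.Ioo (0:ℝ) 1 = Set.Ioc (0:ℝ) (1/2) ∪ Set.Ioo (1/2:ℝ) 1 := by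
    rw [Set.Ioc_union_Ioo_eq_Ioo (by norm_num) (by norm_num)]
  rw [hsplit]
  have hcontf : ∀ s : Set ℝ, s ⊆ Set.Ioo (0:ℝ) 1 ∪ Set.Ioc (0:ℝ) (1/2) ∪ Set.Ioo (1/2:ℝ) 1 → True := fun _ _ => trivial
  have hmeas : ∀ (s : Set ℝ), MeasurableSet s → s ⊆ {x : ℝ | 0 < x ∧ x < 1} →
      AEStronglyMeasurable (fun r : ℝ => r ^ a * (1 - r) ^ b) (volume.restrict s) := by
    intro s hms hsub
    apply ContinuousOn.aestronglyMeasurable _ hms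
    apply ContinuousOn.mul
    · exact ContinuousOn.rpow_const continuousOn_id fun x hx => Or.inl (ne_of_gt (hsub hx).1)
    · exact ContinuousOn.rpow_const (continuousOn_const.sub continuousOn_id)
        fun x hx => Or.inl (sub_ne_zero.mpr (hsub hx).2.ne')
  apply MeasureTheory.IntegrableOn.union
  · have hg : IntegrableOn (fun r : ℝ => (2:ℝ) ^ |b| * r ^ a) (Set.Ioc (0:ℝ) (1/2)) := by
      have := (intervalIntegral.intervalIntegrable_rpow' (a := 0) (b := 1/2) ha).const_mul ((2:ℝ) ^ |b|)
      rw [intervalIntegrable_iff, Set.uIoc_of_le (by norm_num : (0:ℝ) ≤ 1/2)] at this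
      exact this
    apply hg.integrable.mono (hmeas _ measurableSet_Ioc
      (fun x hx => ⟨hx.1, lt_of_le_of_lt hx.2 (by norm_num)⟩))
    filter_upwards [MeasureTheory.ae_restrict_mem measurableSet_Ioc] with r hr
    have hr0 : (0:ℝ) < r := hr.1
    have h1r : (1 - r) ∈ Set.Icc (1/2:ℝ) 1 := ⟨by linarith [hr.2], by linarith⟩
    rw [Real.norm_eq_abs, Real.norm_eq_abs,
      abs_of_nonneg (mul_nonneg (Real.rpow_nonneg hr0.le _) (Real.rpow_nonneg (by linarith [hr.2] : (0:ℝ) ≤ 1 - r) _)),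
      abs_of_nonneg (mul_nonneg (Real.rpow_nonneg (by norm_num) _) (Real.rpow_nonneg hr0.le _))]
    rw [mul_comm ((2:ℝ) ^ |b|) _]
    exact mul_le_mul_of_nonneg_left (key b _ h1r) (Real.rpow_nonneg hr0.le _)
  · have hg : IntegrableOn (fun r : ℝ => (2:ℝ) ^ |a| * (1 - r) ^ b) (Set.Ioo (1/2:ℝ) 1) := by
      have h0 := (intervalIntegral.intervalIntegrable_rpow' (a := 1/2) (b := 0) hb).comp_sub_left 1
      norm_num at h0
      have := h0.const_mul ((2:ℝ) ^ |a|)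
      rw [intervalIntegrable_iff, Set.uIoc_of_le (by norm_num : (1/2:ℝ) ≤ 1)] at this
      exact this.mono_set Set.Ioo_subset_Ioc_self
    apply hg.integrable.mono (hmeas _ measurableSet_Ioo
      (fun x hx => ⟨lt_trans (by norm_num) hx.1, hx.2⟩))
    filter_upwards [MeasureTheory.ae_restrict_mem measurableSet_Ioo] with r hr
    have hr0 : (0:ℝ) < 1 - r := by linarith [hr.2]
    have h1r : r ∈ Set.Icc (1/2:ℝ) 1 := ⟨hr.1.le, hr.2.le⟩
    rw [Real.norm_eq_abs, Real.norm_eq_abs,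
      abs_of_nonneg (mul_nonneg (Real.rpow_nonneg (by linarith [hr.1] : (0:ℝ) ≤ r) _) (Real.rpow_nonneg hr0.le _)),
      abs_of_nonneg (mul_nonneg (Real.rpow_nonneg (by norm_num) _) (Real.rpow_nonneg hr0.le _))]
    exact mul_le_mul_of_nonneg_right (key a _ h1r) (Real.rpow_nonneg hr0.le _)


noncomputable def G (r : ℝ) : ℝ :=
  (1 / (1 + Real.sqrt (1 - r))) * (1 - r) ^ (-(1:ℝ)/2) *
    ((1/2) * (-Real.log r * r ^ (-(1:ℝ)/2)) + 1)

noncomputable def Psi (r : ℝ) : ℝ :=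
  -2 * Real.log (1 + Real.sqrt (1 - r)) -
    Real.sqrt r * (Real.log r + 2) / (1 + Real.sqrt (1 - r)) + 2 * Real.arcsin (Real.sqrt r)

lemma rpow_neg_half_eq {x : ℝ} (hx : 0 ≤ x) : x ^ (-(1:ℝ)/2) = (Real.sqrt x)⁻¹ := by
  rw [Real.sqrt_eq_rpow, show (-(1:ℝ)/2) = -((1:ℝ)/2) by norm_num, Real.rpow_neg hx]

lemma hasDerivAt_Psi {r : ℝ} (hr : r ∈ Set.Ioo (0:ℝ) 1) : HasDerivAt Psi (G r) r := by
  obtain ⟨hr0, hr1⟩ := hr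
  have h1r : (0:ℝ) < 1 - r := by linarith
  set s := Real.sqrt r with hs_def
  set u := Real.sqrt (1 - r) with hu_def
  have hs : 0 < s := Real.sqrt_pos.mpr hr0
  have hu : 0 < u := Real.sqrt_pos.mpr h1r
  have hs2 : s ^ 2 = r := Real.sq_sqrt hr0.le
  have hu2 : u ^ 2 = 1 - r := Real.sq_sqrt h1r.le
  have h1u : (1:ℝ) + u ≠ 0 := by positivity
  have hds : HasDerivAt (fun x : ℝ => Real.sqrt x) (1 / (2 * s)) r := Real.hasDerivAt_sqrt hr0.ne'
  have hdu : HasDerivAt (fun x : ℝ => Real.sqrt (1 - x)) (-(1 / (2 * u))) r := by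
    have h := (Real.hasDerivAt_sqrt h1r.ne').comp r ((hasDerivAt_const r (1:ℝ)).sub (hasDerivAt_id r))
    refine h.congr_deriv ?_
    simp [hu_def]
  have hdd : HasDerivAt (fun x : ℝ => 1 + Real.sqrt (1 - x)) (-(1 / (2 * u))) r := by
    exact hdu.const_add 1
  have h1 : HasDerivAt (fun x : ℝ => -2 * Real.log (1 + Real.sqrt (1 - x)))
      (-2 * ((-(1 / (2 * u))) / (1 + u))) r := by
    exact ((hdd.log h1u)).const_mul (-2 : ℝ)
  have hN : HasDerivAt (fun x : ℝ => Real.sqrt x * (Real.log x + 2))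
      (1 / (2 * s) * (Real.log r + 2) + s * r⁻¹) r :=
    hds.mul ((Real.hasDerivAt_log hr0.ne').add_const 2)
  have h2 : HasDerivAt (fun x : ℝ => Real.sqrt x * (Real.log x + 2) / (1 + Real.sqrt (1 - x)))
      (((1 / (2 * s) * (Real.log r + 2) + s * r⁻¹) * (1 + u) -
        s * (Real.log r + 2) * (-(1 / (2 * u)))) / (1 + u) ^ 2) r :=
    hN.div hdd h1u
  have hsne1 : s ≠ 1 := by
    intro h; rw [h] at hs2; simp at hs2; linarith
  have hsnem1 : s ≠ -1 := by linarith
  have h3 : HasDerivAt (fun x : ℝ => 2 * Real.arcsin (Real.sqrt x))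
      (2 * (1 / Real.sqrt (1 - s ^ 2) * (1 / (2 * s)))) r := by
    have := ((Real.hasDerivAt_arcsin hsnem1 hsne1).comp r hds).const_mul (2:ℝ)
    exact this
  have htotal := (h1.sub h2).add h3
  have hPsi : Psi = fun x : ℝ => -2 * Real.log (1 + Real.sqrt (1 - x)) -
      Real.sqrt x * (Real.log x + 2) / (1 + Real.sqrt (1 - x)) + 2 * Real.arcsin (Real.sqrt x) := rfl
  rw [hPsi]
  refine htotal.congr_deriv (Eq.symm ?_)
  rw [show (1 : ℝ) - s ^ 2 = 1 - r by rw [hs2], ← hu_def]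
  rw [G, rpow_neg_half_eq h1r.le, rpow_neg_half_eq hr0.le, ← hu_def, ← hs_def]
  have hrs : r = s ^ 2 := hs2.symm
  have hu2' : u ^ 2 = 1 - s ^ 2 := by rw [hu2, hs2]
  rw [hrs]
  field_simp
  linear_combination (2 + Real.log (s ^ 2)) * hu2'


lemma core_estimate {r δ : ℝ} (hr : r ∈ Set.Ioo (0:ℝ) 1) (hδ : δ ∈ Set.Ioo (1/4:ℝ) (3/4)) :
    |(1 / (1 - 2*δ)) * (r ^ (-(1:ℝ)/2) - r ^ (-δ))| ≤ 4 * r ^ (-(7:ℝ)/8) := by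
  obtain ⟨hr0, hr1⟩ := hr
  have hL : Real.log r < 0 := Real.log_neg hr0 hr1
  set L := Real.log r with hL_def
  have hlog18 : -L ≤ 8 * r ^ (-(1:ℝ)/8) := by
    have h := Real.log_le_sub_one_of_pos (Real.rpow_pos_of_pos hr0 (-(1:ℝ)/8))
    rw [Real.log_rpow hr0] at h
    have hpos : (0:ℝ) < r ^ (-(1:ℝ)/8) := Real.rpow_pos_of_pos hr0 _
    nlinarith
  rcases eq_or_ne δ (1/2) with hδ2 | hδ2
  · rw [hδ2]
    norm_num
    positivity
  · have hc : (1:ℝ)/2 - δ ≠ 0 := by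
      intro h; apply hδ2; linarith [sub_eq_zero.mp h]
    set c := (1:ℝ)/2 - δ with hc_def
    have hcabs : |c| ≤ 1/4 := by
      rw [abs_le]; constructor <;> [linarith [hδ.2]; linarith [hδ.1]]
    have hsplit : r ^ (-δ) = r ^ (-(1:ℝ)/2) * r ^ c := by
      rw [← Real.rpow_add hr0]; congr 1; ring
    have hrc : r ^ c = Real.exp (L * c) := Real.rpow_def_of_pos hr0 c
    have h14 : r ^ (-(1:ℝ)/4) = Real.exp (-L/4) := by
      rw [Real.rpow_def_of_pos hr0]; congr 1; ring
    have key : |1 - r ^ c| ≤ |c| * (-L) * r ^ (-(1:ℝ)/4) := by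
      rw [hrc, abs_sub_comm, h14]
      calc |Real.exp (L * c) - 1| ≤ |L * c| * Real.exp |L * c| := abs_exp_sub_one_le' _
        _ ≤ |c| * (-L) * Real.exp (-L/4) := by
            have h1 : |L * c| = (-L) * |c| := by
              rw [abs_mul, abs_of_neg hL]
            rw [h1]
            have h2 : (-L) * |c| ≤ -L/4 := by nlinarith
            have h3 : Real.exp ((-L) * |c|) ≤ Real.exp (-L/4) := Real.exp_le_exp.mpr h2
            have h4 : 0 ≤ (-L) * |c| := mul_nonneg (by linarith) (abs_nonneg _)
            nlinarith [Real.exp_pos ((-L) * |c|), Real.exp_pos (-L/4)]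
    have h2c : 1 - 2*δ = 2*c := by rw [hc_def]; ring
    have habs : |(1 / (1 - 2*δ)) * (r ^ (-(1:ℝ)/2) - r ^ (-δ))| =
        r ^ (-(1:ℝ)/2) * |1 - r ^ c| / (2 * |c|) := by
      rw [hsplit, h2c, abs_mul, abs_div, abs_one, abs_mul,
        show r ^ (-(1:ℝ)/2) - r ^ (-(1:ℝ)/2) * r ^ c = r ^ (-(1:ℝ)/2) * (1 - r ^ c) by ring,
        abs_mul, abs_of_nonneg (Real.rpow_nonneg hr0.le _), abs_two]
      field_simp
    rw [habs]
    have hcpos : 0 < |c| := abs_pos.mpr hc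
    rw [div_le_iff₀ (by positivity)]
    have hcomb : r ^ (-(1:ℝ)/2) * (r ^ (-(1:ℝ)/8) * r ^ (-(1:ℝ)/4)) = r ^ (-(7:ℝ)/8) := by
      rw [← Real.rpow_add hr0, ← Real.rpow_add hr0]; norm_num
    calc r ^ (-(1:ℝ)/2) * |1 - r ^ c|
        ≤ r ^ (-(1:ℝ)/2) * (|c| * (-L) * r ^ (-(1:ℝ)/4)) := by
          exact mul_le_mul_of_nonneg_left key (Real.rpow_nonneg hr0.le _)
      _ ≤ r ^ (-(1:ℝ)/2) * (|c| * (8 * r ^ (-(1:ℝ)/8)) * r ^ (-(1:ℝ)/4)) := by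
          apply mul_le_mul_of_nonneg_left _ (Real.rpow_nonneg hr0.le _)
          apply mul_le_mul_of_nonneg_right _ (Real.rpow_nonneg hr0.le _)
          exact mul_le_mul_of_nonneg_left hlog18 (abs_nonneg _)
      _ = 4 * (r ^ (-(1:ℝ)/2) * (r ^ (-(1:ℝ)/8) * r ^ (-(1:ℝ)/4))) * (2 * |c|) := by ring
      _ = 4 * r ^ (-(7:ℝ)/8) * (2 * |c|) := by rw [hcomb]

noncomputable def Fd (δ r : ℝ) : ℝ :=
  (1 / (1 + Real.sqrt (1 - r))) * (1 - r) ^ (-(1:ℝ)/2) *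
    ((1 / (1 - 2*δ)) * (r ^ (-(1:ℝ)/2) - r ^ (-δ)) + r ^ ((1:ℝ)/2 - δ))

noncomputable def bound (r : ℝ) : ℝ :=
  (1 - r) ^ (-(1:ℝ)/2) * (4 * r ^ (-(7:ℝ)/8) + r ^ (-(1:ℝ)/4))

lemma bound_integrable : IntegrableOn bound (Set.Ioo (0:ℝ) 1) := by
  have h1 := (integrableOn_rpow_mul_one_sub_rpow (a := -(7:ℝ)/8) (b := -(1:ℝ)/2)
    (by norm_num) (by norm_num)).const_mul (4:ℝ)
  have h2 := integrableOn_rpow_mul_one_sub_rpow (a := -(1:ℝ)/4) (b := -(1:ℝ)/2)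
    (by norm_num) (by norm_num)
  have h3 := h1.add h2
  exact MeasureTheory.IntegrableOn.congr_fun h3
    (fun r _ => by simp only [bound, Pi.add_apply]; ring) measurableSet_Ioo

lemma one_le_rpow_neg {r c : ℝ} (hr0 : 0 < r) (hr1 : r ≤ 1) (hc : c ≤ 0) : 1 ≤ r ^ c := by
  have := Real.rpow_le_rpow_of_exponent_ge hr0 hr1 hc (y := 0)
  rwa [Real.rpow_zero] at this

lemma norm_Fd_le {δ r : ℝ} (hδ : δ ∈ Set.Ioo (1/4:ℝ) (3/4)) (hr : r ∈ Set.Ioo (0:ℝ) 1) :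
    ‖Fd δ r‖ ≤ bound r := by
  obtain ⟨hr0, hr1⟩ := hr
  have h1r : (0:ℝ) < 1 - r := by linarith
  have hu : (0:ℝ) ≤ Real.sqrt (1 - r) := Real.sqrt_nonneg _
  have hA1 : (0:ℝ) < 1 / (1 + Real.sqrt (1 - r)) := by positivity
  have hA2 : 1 / (1 + Real.sqrt (1 - r)) ≤ 1 := by
    rw [div_le_one (by positivity)]; linarith
  have hT : |(1 / (1 - 2*δ)) * (r ^ (-(1:ℝ)/2) - r ^ (-δ)) + r ^ ((1:ℝ)/2 - δ)| ≤
      4 * r ^ (-(7:ℝ)/8) + r ^ (-(1:ℝ)/4) := by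
    calc |(1 / (1 - 2*δ)) * (r ^ (-(1:ℝ)/2) - r ^ (-δ)) + r ^ ((1:ℝ)/2 - δ)|
        ≤ |(1 / (1 - 2*δ)) * (r ^ (-(1:ℝ)/2) - r ^ (-δ))| + |r ^ ((1:ℝ)/2 - δ)| := abs_add_le _ _
      _ ≤ 4 * r ^ (-(7:ℝ)/8) + r ^ (-(1:ℝ)/4) := by
          apply add_le_add (core_estimate ⟨hr0, hr1⟩ hδ)
          rw [abs_of_nonneg (Real.rpow_nonneg hr0.le _)]
          exact Real.rpow_le_rpow_of_exponent_ge hr0 hr1.le (by linarith [hδ.2])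
  rw [Fd, Real.norm_eq_abs, abs_mul, abs_mul,
    abs_of_nonneg hA1.le, abs_of_nonneg (Real.rpow_nonneg h1r.le _)]
  rw [bound]
  calc 1 / (1 + Real.sqrt (1 - r)) * (1 - r) ^ (-(1:ℝ)/2) * |_|
      ≤ 1 * (1 - r) ^ (-(1:ℝ)/2) * (4 * r ^ (-(7:ℝ)/8) + r ^ (-(1:ℝ)/4)) := by
        apply mul_le_mul
        · exact mul_le_mul_of_nonneg_right hA2 (Real.rpow_nonneg h1r.le _)
        · exact hT
        · exact abs_nonneg _
        · positivity
    _ = (1 - r) ^ (-(1:ℝ)/2) * (4 * r ^ (-(7:ℝ)/8) + r ^ (-(1:ℝ)/4)) := by ring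

lemma norm_G_le {r : ℝ} (hr : r ∈ Set.Ioo (0:ℝ) 1) : ‖G r‖ ≤ bound r := by
  obtain ⟨hr0, hr1⟩ := hr
  have h1r : (0:ℝ) < 1 - r := by linarith
  have hL : Real.log r < 0 := Real.log_neg hr0 hr1
  have hA1 : (0:ℝ) < 1 / (1 + Real.sqrt (1 - r)) := by positivity
  have hA2 : 1 / (1 + Real.sqrt (1 - r)) ≤ 1 := by
    rw [div_le_one (by positivity)]; linarith [Real.sqrt_nonneg (1 - r)]
  have hlog18 : -Real.log r ≤ 8 * r ^ (-(1:ℝ)/8) := by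
    have h := Real.log_le_sub_one_of_pos (Real.rpow_pos_of_pos hr0 (-(1:ℝ)/8))
    rw [Real.log_rpow hr0] at h
    have hpos : (0:ℝ) < r ^ (-(1:ℝ)/8) := Real.rpow_pos_of_pos hr0 _
    nlinarith
  have hT0 : (0:ℝ) ≤ (1/2) * (-Real.log r * r ^ (-(1:ℝ)/2)) + 1 := by
    have := Real.rpow_nonneg hr0.le (-(1:ℝ)/2)
    nlinarith
  have hcomb : r ^ (-(1:ℝ)/8) * r ^ (-(1:ℝ)/2) = r ^ (-(5:ℝ)/8) := by
    rw [← Real.rpow_add hr0]; norm_num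
  have hT : (1/2) * (-Real.log r * r ^ (-(1:ℝ)/2)) + 1 ≤
      4 * r ^ (-(7:ℝ)/8) + r ^ (-(1:ℝ)/4) := by
    have h1 : (1/2) * (-Real.log r * r ^ (-(1:ℝ)/2)) ≤ 4 * r ^ (-(5:ℝ)/8) := by
      rw [← hcomb]
      nlinarith [Real.rpow_nonneg hr0.le (-(1:ℝ)/2), Real.rpow_pos_of_pos hr0 (-(1:ℝ)/8),
        mul_le_mul_of_nonneg_right hlog18 (Real.rpow_nonneg hr0.le (-(1:ℝ)/2))]
    have h2 : r ^ (-(5:ℝ)/8) ≤ r ^ (-(7:ℝ)/8) :=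
      Real.rpow_le_rpow_of_exponent_ge hr0 hr1.le (by norm_num)
    have h3 : (1:ℝ) ≤ r ^ (-(1:ℝ)/4) := one_le_rpow_neg hr0 hr1.le (by norm_num)
    linarith
  rw [G, Real.norm_eq_abs, abs_mul, abs_mul, abs_of_nonneg hA1.le,
    abs_of_nonneg (Real.rpow_nonneg h1r.le _), abs_of_nonneg hT0, bound]
  calc 1 / (1 + Real.sqrt (1 - r)) * (1 - r) ^ (-(1:ℝ)/2) *
        ((1/2) * (-Real.log r * r ^ (-(1:ℝ)/2)) + 1)
      ≤ 1 * (1 - r) ^ (-(1:ℝ)/2) * (4 * r ^ (-(7:ℝ)/8) + r ^ (-(1:ℝ)/4)) := by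
        apply mul_le_mul
        · exact mul_le_mul_of_nonneg_right hA2 (Real.rpow_nonneg h1r.le _)
        · exact hT
        · exact hT0
        · positivity
    _ = (1 - r) ^ (-(1:ℝ)/2) * (4 * r ^ (-(7:ℝ)/8) + r ^ (-(1:ℝ)/4)) := by ring

lemma continuousOn_G : ContinuousOn G (Set.Ioo (0:ℝ) 1) := by
  have hden : ∀ x ∈ Set.Ioo (0:ℝ) 1, (1:ℝ) + Real.sqrt (1 - x) ≠ 0 := by
    intro x _; positivity
  apply ContinuousOn.mul
  apply ContinuousOn.mul
  · exact continuousOn_const.div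
      (continuous_const.add (Real.continuous_sqrt.comp (continuous_const.sub continuous_id))).continuousOn hden
  · exact (continuousOn_const.sub continuousOn_id).rpow_const
      fun x hx => Or.inl (sub_ne_zero.mpr hx.2.ne')
  · apply ContinuousOn.add _ continuousOn_const
    apply ContinuousOn.mul continuousOn_const
    apply ContinuousOn.mul
    · exact (Real.continuousOn_log.mono (fun x hx => ne_of_gt hx.1)).neg
    · exact continuousOn_id.rpow_const fun x hx => Or.inl (ne_of_gt hx.1)

lemma G_integrableOn : IntegrableOn G (Set.Ioo (0:ℝ) 1) := by
  apply bound_integrable.integrable.mono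
    (continuousOn_G.aestronglyMeasurable measurableSet_Ioo)
  filter_upwards [MeasureTheory.ae_restrict_mem measurableSet_Ioo] with r hr
  calc ‖G r‖ ≤ bound r := norm_G_le hr
    _ ≤ ‖bound r‖ := le_abs_self _

lemma continuousOn_Fd (δ : ℝ) : ContinuousOn (fun r => Fd δ r) (Set.Ioo (0:ℝ) 1) := by
  have hden : ∀ x ∈ Set.Ioo (0:ℝ) 1, (1:ℝ) + Real.sqrt (1 - x) ≠ 0 := by
    intro x _; positivity
  apply ContinuousOn.mul
  apply ContinuousOn.mul
  · exact continuousOn_const.div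
      (continuous_const.add (Real.continuous_sqrt.comp (continuous_const.sub continuous_id))).continuousOn hden
  · exact (continuousOn_const.sub continuousOn_id).rpow_const
      fun x hx => Or.inl (sub_ne_zero.mpr hx.2.ne')
  · apply ContinuousOn.add
    · apply ContinuousOn.mul continuousOn_const
      apply ContinuousOn.sub
      · exact continuousOn_id.rpow_const fun x hx => Or.inl (ne_of_gt hx.1)
      · exact continuousOn_id.rpow_const fun x hx => Or.inl (ne_of_gt hx.1)
    · exact continuousOn_id.rpow_const fun x hx => Or.inl (ne_of_gt hx.1)

lemma tendsto_Psi_zero : Tendsto Psi (nhdsWithin (0:ℝ) (Set.Ioi 0)) (nhds (-Real.log 4)) := by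
  have hlog4 : Real.log 4 = 2 * Real.log 2 := by
    rw [show (4:ℝ) = 2^2 by norm_num, Real.log_pow]; push_cast; ring
  have hsq : Continuous (fun r : ℝ => Real.sqrt (1 - r)) :=
    Real.continuous_sqrt.comp (continuous_const.sub continuous_id)
  have h1 : Tendsto (fun r : ℝ => -2 * Real.log (1 + Real.sqrt (1 - r)))
      (nhdsWithin (0:ℝ) (Set.Ioi 0)) (nhds (-2 * Real.log 2)) := by
    have hc : ContinuousAt (fun r : ℝ => -2 * Real.log (1 + Real.sqrt (1 - r))) 0 := by
      apply ContinuousAt.mul continuousAt_const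
      apply ContinuousAt.log (continuousAt_const.add hsq.continuousAt)
      simp [Real.sqrt_one]
    have := hc.tendsto.mono_left (nhdsWithin_le_nhds (s := Set.Ioi (0:ℝ)))
    norm_num [Real.sqrt_one] at this
    simpa [neg_mul] using this
  have h2 : Tendsto (fun r : ℝ => Real.sqrt r * (Real.log r + 2) / (1 + Real.sqrt (1 - r)))
      (nhdsWithin (0:ℝ) (Set.Ioi 0)) (nhds 0) := by
    have hnum : Tendsto (fun r : ℝ => Real.sqrt r * (Real.log r + 2))
        (nhdsWithin (0:ℝ) (Set.Ioi 0)) (nhds 0) := by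
      have ha : Tendsto (fun r : ℝ => Real.log r * r ^ ((1:ℝ)/2))
          (nhdsWithin (0:ℝ) (Set.Ioi 0)) (nhds 0) :=
        tendsto_log_mul_rpow_nhdsGT_zero (by norm_num)
      have hb : Tendsto (fun r : ℝ => 2 * Real.sqrt r) (nhdsWithin (0:ℝ) (Set.Ioi 0)) (nhds 0) := by
        have := ((continuous_const (y := (2:ℝ))).mul Real.continuous_sqrt).tendsto' 0 0 (by simp)
        exact this.mono_left (nhdsWithin_le_nhds (s := Set.Ioi (0:ℝ)))
      have := ha.add hb
      rw [add_zero] at this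
      apply this.congr
      intro r
      rw [Real.sqrt_eq_rpow]
      ring
    have hden : Tendsto (fun r : ℝ => 1 + Real.sqrt (1 - r))
        (nhdsWithin (0:ℝ) (Set.Ioi 0)) (nhds 2) := by
      have := ((continuous_const (y := (1:ℝ))).add hsq).tendsto' 0 2 (by norm_num)
      exact this.mono_left (nhdsWithin_le_nhds (s := Set.Ioi (0:ℝ)))
    have := hnum.div hden (by norm_num)
    rw [zero_div] at this; exact this
  have h3 : Tendsto (fun r : ℝ => 2 * Real.arcsin (Real.sqrt r))
      (nhdsWithin (0:ℝ) (Set.Ioi 0)) (nhds 0) := by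
    have hc : ContinuousAt (fun r : ℝ => 2 * Real.arcsin (Real.sqrt r)) 0 :=
      continuousAt_const.mul (Real.continuous_arcsin.continuousAt.comp Real.continuous_sqrt.continuousAt)
    have := hc.tendsto.mono_left (nhdsWithin_le_nhds (s := Set.Ioi (0:ℝ)))
    simpa [Real.sqrt_zero, Real.arcsin_zero] using this
  have htot := (h1.sub h2).add h3
  rw [add_zero, sub_zero] at htot
  rw [hlog4, ← neg_mul]
  exact htot

lemma tendsto_Psi_one : Tendsto Psi (nhdsWithin (1:ℝ) (Set.Iio 1)) (nhds (Real.pi - 2)) := by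
  have hsq : Continuous (fun r : ℝ => Real.sqrt (1 - r)) :=
    Real.continuous_sqrt.comp (continuous_const.sub continuous_id)
  have hc : ContinuousAt Psi 1 := by
    apply ContinuousAt.add
    apply ContinuousAt.sub
    · apply ContinuousAt.mul continuousAt_const
      apply ContinuousAt.log (continuousAt_const.add hsq.continuousAt)
      simp
    · apply ContinuousAt.div
      · exact (Real.continuous_sqrt.continuousAt).mul
          ((Real.continuousAt_log (by norm_num)).add continuousAt_const)
      · exact continuousAt_const.add hsq.continuousAt
      · simp
    · exact continuousAt_const.mul
        (Real.continuous_arcsin.continuousAt.comp Real.continuous_sqrt.continuousAt)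
  have h := hc.tendsto.mono_left (nhdsWithin_le_nhds (s := Set.Iio (1:ℝ)))
  have hval : Psi 1 = Real.pi - 2 := by
    norm_num [Psi, Real.sqrt_one, Real.arcsin_one, Real.log_one]
    ring
  rwa [hval] at h

lemma integral_G_value : ∫ r in Set.Ioo (0:ℝ) 1, G r = Real.pi + Real.log 4 - 2 := by
  have hii : IntervalIntegrable G volume 0 1 := by
    rw [intervalIntegrable_iff_integrableOn_Ioo_of_le zero_le_one]
    exact G_integrableOn
  have hftc := intervalIntegral.integral_eq_sub_of_hasDerivAt_of_tendsto
    (f := Psi) (f' := G) zero_lt_one (fun x hx => hasDerivAt_Psi hx) hii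
    tendsto_Psi_zero tendsto_Psi_one
  rw [intervalIntegral.integral_of_le zero_le_one, MeasureTheory.integral_Ioc_eq_integral_Ioo] at hftc
  rw [hftc]
  ring

lemma tendsto_Fd_pointwise {r : ℝ} (hr : r ∈ Set.Ioo (0:ℝ) 1) :
    Tendsto (fun δ => Fd δ r)
      (nhdsWithin (1/2 : ℝ) (Set.Ioo (0:ℝ) 1 \ {1/2})) (nhds (G r)) := by
  obtain ⟨hr0, hr1⟩ := hr
  set l := nhdsWithin (1/2 : ℝ) (Set.Ioo (0:ℝ) 1 \ {1/2}) with hl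
  have hl_le : l ≤ nhdsWithin (1/2 : ℝ) {(1/2:ℝ)}ᶜ :=
    nhdsWithin_mono _ (fun x hx => hx.2)
  set g : ℝ → ℝ := fun δ => r ^ (-δ) with hg_def
  have hg : HasDerivAt g (-Real.log r * r ^ (-(1:ℝ)/2)) (1/2 : ℝ) := by
    have h0 : HasDerivAt (fun δ : ℝ => Real.log r * (-δ)) (-Real.log r) (1/2 : ℝ) := by
      simpa using ((hasDerivAt_id (1/2:ℝ)).neg.const_mul (Real.log r))
    have h1 := h0.exp
    have heq : (fun δ : ℝ => Real.exp (Real.log r * (-δ))) = g := by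
      funext δ
      show Real.exp (Real.log r * (-δ)) = r ^ (-δ)
      exact (Real.rpow_def_of_pos hr0 _).symm
    rw [heq] at h1
    convert h1 using 1
    rw [← Real.rpow_def_of_pos hr0]
    norm_num
    ring
  have hslope := hasDerivAt_iff_tendsto_slope.mp hg
  have ht1 : Tendsto (fun δ => (1 / (1 - 2*δ)) * (r ^ (-(1:ℝ)/2) - r ^ (-δ))) l
      (nhds ((1/2) * (-Real.log r * r ^ (-(1:ℝ)/2)))) := by
    have h2 := (hslope.mono_left hl_le).const_mul (1/2 : ℝ)
    apply h2.congr'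
    filter_upwards [self_mem_nhdsWithin] with δ hδ
    have hδne : δ ≠ 1/2 := hδ.2
    have h3 : δ - 1/2 ≠ 0 := sub_ne_zero.mpr hδne
    have h4 : 1 - 2*δ ≠ 0 := by intro h; apply hδne; linarith
    have hghalf : g (1/2) = r ^ (-(1:ℝ)/2) := by
      rw [hg_def]; norm_num
    rw [slope_def_field, hghalf]
    show (1:ℝ)/2 * ((r ^ (-δ) - r ^ (-(1:ℝ)/2)) / (δ - 1/2)) =
      1 / (1 - 2*δ) * (r ^ (-(1:ℝ)/2) - r ^ (-δ))
    have h5 : δ * 2 - 1 ≠ 0 := by intro h; apply hδne; linarith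
    have h6 : -1 + δ * 2 ≠ 0 := by intro h; apply hδne; linarith
    generalize r ^ (-(1:ℝ)/2) = a
    generalize r ^ (-δ) = b
    field_simp
    linear_combination (a - b) * mul_inv_cancel₀ h6
  have ht2 : Tendsto (fun δ => r ^ ((1:ℝ)/2 - δ)) l (nhds 1) := by
    have heq : (fun δ : ℝ => r ^ ((1:ℝ)/2 - δ)) =
        fun δ => Real.exp (Real.log r * ((1:ℝ)/2 - δ)) := by
      funext δ; rw [Real.rpow_def_of_pos hr0]
    rw [heq]
    have hc : Continuous (fun δ : ℝ => Real.exp (Real.log r * ((1:ℝ)/2 - δ))) := by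
      continuity
    have := hc.tendsto (1/2 : ℝ)
    norm_num at this
    exact this.mono_left nhdsWithin_le_nhds
  have := (ht1.add ht2).const_mul ((1 / (1 + Real.sqrt (1 - r))) * (1 - r) ^ (-(1:ℝ)/2))
  exact this


theorem Omega_tendsto_half :
    Filter.Tendsto Omega (nhdsWithin (1/2 : ℝ) (Set.Ioo (0:ℝ) 1 \ {1/2}))
      (nhds (1 + (Real.log 4 - 2) / Real.pi)) := by

  set l := nhdsWithin (1/2 : ℝ) (Set.Ioo (0:ℝ) 1 \ {1/2}) with hl
  have hmem : Set.Ioo (1/4:ℝ) (3/4) ∈ l :=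
    mem_nhdsWithin_of_mem_nhds (isOpen_Ioo.mem_nhds (by norm_num))
  have hmeas : ∀ᶠ δ in l, AEStronglyMeasurable (fun r => Fd δ r)
      (volume.restrict (Set.Ioo (0:ℝ) 1)) :=
    Filter.Eventually.of_forall fun δ =>
      (continuousOn_Fd δ).aestronglyMeasurable measurableSet_Ioo
  have hbound : ∀ᶠ δ in l, ∀ᵐ r ∂(volume.restrict (Set.Ioo (0:ℝ) 1)), ‖Fd δ r‖ ≤ bound r := by
    filter_upwards [hmem] with δ hδ
    filter_upwards [MeasureTheory.ae_restrict_mem measurableSet_Ioo] with r hr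
    exact norm_Fd_le hδ hr
  have hlim : ∀ᵐ r ∂(volume.restrict (Set.Ioo (0:ℝ) 1)),
      Tendsto (fun δ => Fd δ r) l (nhds (G r)) := by
    filter_upwards [MeasureTheory.ae_restrict_mem measurableSet_Ioo] with r hr
    exact tendsto_Fd_pointwise hr
  have hDCT := MeasureTheory.tendsto_integral_filter_of_dominated_convergence
    bound hmeas hbound bound_integrable hlim
  rw [integral_G_value] at hDCT
  have hfinal := hDCT.const_mul (1 / Real.pi)
  have hval : (1 / Real.pi) * (Real.pi + Real.log 4 - 2) = 1 + (Real.log 4 - 2) / Real.pi := by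
    field_simp
    ring
  have hOmega : Omega = fun δ => (1 / Real.pi) * ∫ r in Set.Ioo (0:ℝ) 1, Fd δ r := rfl
  rw [hOmega, ← hval]
  exact hfinal
end

section
/- The function Ω is continuous and strictly monotonically increasing on the open interval (1/2, 1): for all real δ₁, δ₂ with 1/2 < δ₁ < δ₂ < 1 one has Ω(δ₁) < Ω(δ₂), and Ω restricted to (1/2, 1) is continuous. -/
open MeasureTheory Set

lemma exp_slope_lt {a b : ℝ} (ha : 0 < a) (hab : a < b) :
    (Real.exp a - 1) / a < (Real.exp b - 1) / b := by
  have := strictConvexOn_exp.secant_strict_mono (a := 0) (x := a) (y := b)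
    (Set.mem_univ _) (Set.mem_univ _) (Set.mem_univ _) (ne_of_gt ha)
    (ne_of_gt (ha.trans hab)) hab
  simpa [Real.exp_zero] using this

lemma g_eq {r δ : ℝ} (hr : 0 < r) (hδ : δ ≠ 1/2) :
    (1 / (1 - 2*δ)) * (r ^ (-(1:ℝ)/2) - r ^ (-δ)) + r ^ ((1:ℝ)/2 - δ)
      = r ^ (-(1:ℝ)/2) * ((Real.exp ((δ - 1/2) * (-Real.log r)) - 1) / (2*(δ - 1/2)))
        + Real.exp ((δ - 1/2) * (-Real.log r)) := by
  have hE : r ^ ((1:ℝ)/2 - δ) = Real.exp ((δ - 1/2) * (-Real.log r)) := by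
    rw [Real.rpow_def_of_pos hr]; ring_nf
  have hsplit : r ^ (-δ) = r ^ (-(1:ℝ)/2) * r ^ ((1:ℝ)/2 - δ) := by
    rw [← Real.rpow_add hr]; congr 1; ring
  rw [hsplit, hE]
  set x := r ^ (-(1:ℝ)/2)
  set E := Real.exp ((δ - 1/2) * (-Real.log r))
  have hs : δ - 1/2 ≠ 0 := sub_ne_zero.mpr hδ
  have h2 : (1:ℝ) - 2*δ ≠ 0 := by intro h; apply hδ; linarith
  have h4 : 2*(δ - 1/2) = -(1 - 2*δ) := by ring
  have key : x * ((E - 1) / (2 * (δ - 1/2))) = (x - x*E) / (1 - 2*δ) := by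
    rw [h4, div_neg, mul_neg, ← mul_div_assoc, ← neg_div]
    congr 1; ring
  rw [key, one_div_mul_eq_div]

/-- the inner function is strictly increasing in δ on (1/2, ∞) for fixed r ∈ (0,1) -/
lemma g_lt {r δ₁ δ₂ : ℝ} (hr0 : 0 < r) (hr1 : r < 1) (h1 : 1/2 < δ₁) (h12 : δ₁ < δ₂) :
    (1 / (1 - 2*δ₁)) * (r ^ (-(1:ℝ)/2) - r ^ (-δ₁)) + r ^ ((1:ℝ)/2 - δ₁)
      < (1 / (1 - 2*δ₂)) * (r ^ (-(1:ℝ)/2) - r ^ (-δ₂)) + r ^ ((1:ℝ)/2 - δ₂) := by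
  have hδ1 : δ₁ ≠ 1/2 := ne_of_gt h1
  have hδ2 : δ₂ ≠ 1/2 := ne_of_gt (h1.trans h12)
  rw [g_eq hr0 hδ1, g_eq hr0 hδ2]
  set L : ℝ := -Real.log r with hL
  have hLpos : 0 < L := by
    have := Real.log_neg hr0 hr1; simp [hL]; linarith
  have hs1 : 0 < δ₁ - 1/2 := by linarith
  have hs2 : 0 < δ₂ - 1/2 := by linarith
  have hxpos : 0 < r ^ (-(1:ℝ)/2) := Real.rpow_pos_of_pos hr0 _
  have hab : (δ₁ - 1/2) * L < (δ₂ - 1/2) * L := by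
    apply mul_lt_mul_of_pos_right (by linarith) hLpos
  have hslope := exp_slope_lt (mul_pos hs1 hLpos) hab
  have hid : ∀ s : ℝ, 0 < s →
      (Real.exp (s * L) - 1) / (2 * s) = (L / 2) * ((Real.exp (s * L) - 1) / (s * L)) := by
    intro s hs
    field_simp
  have hterm1 : (Real.exp ((δ₁ - 1/2) * L) - 1) / (2 * (δ₁ - 1/2))
      < (Real.exp ((δ₂ - 1/2) * L) - 1) / (2 * (δ₂ - 1/2)) := by
    rw [hid _ hs1, hid _ hs2]
    exact mul_lt_mul_of_pos_left hslope (by linarith)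
  have hterm2 : Real.exp ((δ₁ - 1/2) * L) < Real.exp ((δ₂ - 1/2) * L) :=
    Real.exp_lt_exp.mpr hab
  exact add_lt_add (mul_lt_mul_of_pos_left hterm1 hxpos) hterm2

noncomputable def Fo (δ r : ℝ) : ℝ :=
  (1 / (1 + Real.sqrt (1 - r))) * (1 - r) ^ (-(1:ℝ)/2) *
    ((1 / (1 - 2*δ)) * (r ^ (-(1:ℝ)/2) - r ^ (-δ)) + r ^ ((1:ℝ)/2 - δ))

lemma Fo_bound {a b δ r : ℝ} (ha : 1/2 < a) (hb : b < 1) (hδa : a ≤ δ) (hδb : δ ≤ b)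
    (hr : r ∈ Ioo (0:ℝ) 1) :
    ‖Fo δ r‖ ≤ (2/(2*a - 1) + 1) * (r ^ (-b) * (1 - r) ^ (-(1:ℝ)/2)) := by
  obtain ⟨hr0, hr1⟩ := hr
  have h1r : (0:ℝ) < 1 - r := by linarith
  have hp : (0:ℝ) < (1 - r) ^ (-(1:ℝ)/2) := Real.rpow_pos_of_pos h1r _
  have hq : (0:ℝ) < r ^ (-b) := Real.rpow_pos_of_pos hr0 _
  have hw1 : (0:ℝ) < 1 + Real.sqrt (1 - r) := by positivity
  have hw1' : 1/(1 + Real.sqrt (1 - r)) ≤ 1 := by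
    rw [div_le_one hw1]; nlinarith [Real.sqrt_nonneg (1 - r)]
  have hw1'' : (0:ℝ) ≤ 1/(1 + Real.sqrt (1 - r)) := by positivity
  have e1 : r ^ (-(1:ℝ)/2) ≤ r ^ (-b) :=
    Real.rpow_le_rpow_of_exponent_ge hr0 hr1.le (by linarith)
  have e2 : r ^ (-δ) ≤ r ^ (-b) :=
    Real.rpow_le_rpow_of_exponent_ge hr0 hr1.le (by linarith)
  have e3 : r ^ ((1:ℝ)/2 - δ) ≤ r ^ (-b) :=
    Real.rpow_le_rpow_of_exponent_ge hr0 hr1.le (by linarith)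
  have ha1 : (0:ℝ) < 2*a - 1 := by linarith
  have habs : |1/(1 - 2*δ)| ≤ 1/(2*a - 1) := by
    rw [abs_div, abs_one, abs_of_neg (by linarith : 1 - 2*δ < 0)]
    apply one_div_le_one_div_of_le ha1; linarith
  have hgabs : |(1 / (1 - 2*δ)) * (r ^ (-(1:ℝ)/2) - r ^ (-δ)) + r ^ ((1:ℝ)/2 - δ)|
      ≤ (2/(2*a - 1) + 1) * r ^ (-b) := by
    have t1 : |(1 / (1 - 2*δ)) * (r ^ (-(1:ℝ)/2) - r ^ (-δ))|
        ≤ (1/(2*a - 1)) * (2 * r ^ (-b)) := by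
      rw [abs_mul]
      apply mul_le_mul habs ?_ (abs_nonneg _) (by positivity)
      calc |r ^ (-(1:ℝ)/2) - r ^ (-δ)| ≤ |r ^ (-(1:ℝ)/2)| + |r ^ (-δ)| := abs_sub _ _
        _ = r ^ (-(1:ℝ)/2) + r ^ (-δ) := by
            rw [abs_of_pos (Real.rpow_pos_of_pos hr0 _), abs_of_pos (Real.rpow_pos_of_pos hr0 _)]
        _ ≤ 2 * r ^ (-b) := by linarith
    calc |(1 / (1 - 2*δ)) * (r ^ (-(1:ℝ)/2) - r ^ (-δ)) + r ^ ((1:ℝ)/2 - δ)|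
        ≤ |(1 / (1 - 2*δ)) * (r ^ (-(1:ℝ)/2) - r ^ (-δ))| + |r ^ ((1:ℝ)/2 - δ)| := abs_add_le _ _
      _ ≤ (1/(2*a - 1)) * (2 * r ^ (-b)) + r ^ (-b) := by
          refine add_le_add t1 ?_
          rw [abs_of_pos (Real.rpow_pos_of_pos hr0 _)]; exact e3
      _ = (2/(2*a - 1) + 1) * r ^ (-b) := by ring
  calc ‖Fo δ r‖
      = (1/(1 + Real.sqrt (1 - r))) * (1 - r) ^ (-(1:ℝ)/2) *
          |(1 / (1 - 2*δ)) * (r ^ (-(1:ℝ)/2) - r ^ (-δ)) + r ^ ((1:ℝ)/2 - δ)| := by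
        rw [Fo, Real.norm_eq_abs, abs_mul, abs_mul, abs_of_nonneg hw1'', abs_of_pos hp]
    _ ≤ 1 * (1 - r) ^ (-(1:ℝ)/2) * ((2/(2*a - 1) + 1) * r ^ (-b)) := by
        apply mul_le_mul (mul_le_mul hw1' le_rfl hp.le zero_le_one) hgabs (abs_nonneg _)
        positivity
    _ = (2/(2*a - 1) + 1) * (r ^ (-b) * (1 - r) ^ (-(1:ℝ)/2)) := by ring

lemma half_pow_neg {b : ℝ} : ((1:ℝ)/2) ^ (-b) = (2:ℝ) ^ b := by
  rw [one_div, Real.inv_rpow (by norm_num), ← Real.rpow_neg (by norm_num), neg_neg]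

lemma cont_bound {b : ℝ} : ContinuousOn (fun r : ℝ => r ^ (-b) * (1 - r) ^ (-(1:ℝ)/2))
    (Ioo (0:ℝ) 1) := by
  apply ContinuousOn.mul
  · intro r hr
    exact (Real.continuousAt_rpow_const r (-b) (Or.inl (ne_of_gt hr.1))).continuousWithinAt
  · apply ContinuousOn.rpow_const (by fun_prop)
    intro r hr
    exact Or.inl (sub_ne_zero.mpr hr.2.ne')

lemma bound_integrable_s6 {b : ℝ} (hb0 : 1/2 < b) (hb : b < 1) :
    IntegrableOn (fun r : ℝ => r ^ (-b) * (1 - r) ^ (-(1:ℝ)/2)) (Ioo (0:ℝ) 1) := by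
  have h2 : ((1:ℝ)/2) ^ (-(1:ℝ)/2) ≤ 2 := by
    rw [show -(1:ℝ)/2 = -((1:ℝ)/2) by norm_num, half_pow_neg]
    calc (2:ℝ) ^ ((1:ℝ)/2) ≤ (2:ℝ) ^ (1:ℝ) :=
          Real.rpow_le_rpow_of_exponent_le one_le_two (by norm_num)
      _ = 2 := Real.rpow_one 2
  have h2b : ((1:ℝ)/2) ^ (-b) ≤ 2 := by
    rw [half_pow_neg]
    calc (2:ℝ) ^ b ≤ (2:ℝ) ^ (1:ℝ) :=
          Real.rpow_le_rpow_of_exponent_le one_le_two (by linarith)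
      _ = 2 := Real.rpow_one 2
  have i1 : IntegrableOn (fun r : ℝ => r ^ (-b)) (Ioc (0:ℝ) (1/2)) := by
    rw [← intervalIntegrable_iff_integrableOn_Ioc_of_le (by norm_num : (0:ℝ) ≤ 1/2)]
    exact intervalIntegral.intervalIntegrable_rpow' (by linarith)
  have I1 : IntegrableOn (fun r : ℝ => r ^ (-b) * (1 - r) ^ (-(1:ℝ)/2)) (Ioc (0:ℝ) (1/2)) := by
    apply Integrable.mono' (i1.const_mul 2)
    · exact (cont_bound.mono (fun x hx => ⟨hx.1, by linarith [hx.2]⟩)).aestronglyMeasurable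
        measurableSet_Ioc
    · filter_upwards [ae_restrict_mem measurableSet_Ioc] with r hr
      have hr0 : 0 < r := hr.1
      have h1r : (0:ℝ) < 1 - r := by linarith [hr.2]
      have e : (1 - r) ^ (-(1:ℝ)/2) ≤ 2 := by
        calc (1 - r) ^ (-(1:ℝ)/2) ≤ ((1:ℝ)/2) ^ (-(1:ℝ)/2) :=
              Real.rpow_le_rpow_of_nonpos (by norm_num) (by linarith [hr.2]) (by norm_num)
          _ ≤ 2 := h2
      rw [Real.norm_eq_abs, abs_mul, abs_of_pos (Real.rpow_pos_of_pos hr0 _),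
        abs_of_pos (Real.rpow_pos_of_pos h1r _), mul_comm (2:ℝ)]
      exact mul_le_mul_of_nonneg_left e (Real.rpow_pos_of_pos hr0 _).le
  have i2 : IntegrableOn (fun r : ℝ => (1 - r) ^ (-(1:ℝ)/2)) (Ioc (1/2:ℝ) 1) := by
    have h := (intervalIntegral.intervalIntegrable_rpow' (r := -(1:ℝ)/2) (by norm_num)
      (a := 0) (b := 1/2)).comp_sub_left 1
    rw [show (1:ℝ) - 1/2 = 1/2 by norm_num, sub_zero] at h
    exact (intervalIntegrable_iff_integrableOn_Ioc_of_le (by norm_num)).mp h.symm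
  have I2 : IntegrableOn (fun r : ℝ => r ^ (-b) * (1 - r) ^ (-(1:ℝ)/2)) (Ioo (1/2:ℝ) 1) := by
    apply Integrable.mono' (((i2.mono_set Ioo_subset_Ioc_self)).const_mul 2)
    · exact (cont_bound.mono (fun x hx => ⟨by linarith [hx.1], hx.2⟩)).aestronglyMeasurable
        measurableSet_Ioo
    · filter_upwards [ae_restrict_mem measurableSet_Ioo] with r hr
      have hr0 : (0:ℝ) < r := by linarith [hr.1]
      have h1r : (0:ℝ) < 1 - r := by linarith [hr.2]
      have e : r ^ (-b) ≤ 2 := by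
        calc r ^ (-b) ≤ ((1:ℝ)/2) ^ (-b) :=
              Real.rpow_le_rpow_of_nonpos (by norm_num) (by linarith [hr.1]) (by linarith)
          _ ≤ 2 := h2b
      rw [Real.norm_eq_abs, abs_mul, abs_of_pos (Real.rpow_pos_of_pos hr0 _),
        abs_of_pos (Real.rpow_pos_of_pos h1r _)]
      exact mul_le_mul_of_nonneg_right e (Real.rpow_pos_of_pos h1r _).le
  have := I1.union I2
  apply this.mono_set
  intro x hx
  by_cases h : x ≤ 1/2
  · exact Or.inl ⟨hx.1, h⟩
  · exact Or.inr ⟨lt_of_not_ge h, hx.2⟩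

lemma Fo_contOn (δ : ℝ) : ContinuousOn (Fo δ) (Ioo (0:ℝ) 1) := by
  have hA : Continuous fun r : ℝ => 1 / (1 + Real.sqrt (1 - r)) := by
    apply continuous_const.div (by fun_prop)
    intro x
    positivity
  have hB : ContinuousOn (fun r : ℝ => (1 - r) ^ (-(1:ℝ)/2)) (Ioo (0:ℝ) 1) := by
    apply ContinuousOn.rpow_const (by fun_prop)
    exact fun r hr => Or.inl (sub_ne_zero.mpr hr.2.ne')
  have hrp : ∀ c : ℝ, ContinuousOn (fun r : ℝ => r ^ c) (Ioo (0:ℝ) 1) := fun c r hr =>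
    (Real.continuousAt_rpow_const r c (Or.inl (ne_of_gt hr.1))).continuousWithinAt
  exact (hA.continuousOn.mul hB).mul
    ((continuousOn_const.mul ((hrp _).sub (hrp _))).add (hrp _))

lemma Fo_integrable {δ : ℝ} (h1 : 1/2 < δ) (h2 : δ < 1) :
    IntegrableOn (Fo δ) (Ioo (0:ℝ) 1) := by
  apply Integrable.mono' ((bound_integrable_s6 h1 h2).const_mul (2/(2*δ - 1) + 1))
  · exact (Fo_contOn δ).aestronglyMeasurable measurableSet_Ioo
  · filter_upwards [ae_restrict_mem measurableSet_Ioo] with r hr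
    exact Fo_bound h1 h2 le_rfl le_rfl hr

lemma Fo_lt {r δ₁ δ₂ : ℝ} (hr : r ∈ Ioo (0:ℝ) 1) (h1 : 1/2 < δ₁) (h12 : δ₁ < δ₂) :
    Fo δ₁ r < Fo δ₂ r := by
  have h1r : (0:ℝ) < 1 - r := by linarith [hr.2]
  have hw : (0:ℝ) < (1 / (1 + Real.sqrt (1 - r))) * (1 - r) ^ (-(1:ℝ)/2) := by positivity
  exact mul_lt_mul_of_pos_left (g_lt hr.1 hr.2 h1 h12) hw

lemma Omega_eq (δ : ℝ) : Omega δ = (1 / Real.pi) * ∫ r in Ioo (0:ℝ) 1, Fo δ r := rfl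

theorem Omega_strictMono_continuous :
    (∀ δ₁ δ₂ : ℝ, 1/2 < δ₁ → δ₁ < δ₂ → δ₂ < 1 → Omega δ₁ < Omega δ₂) ∧
      ContinuousOn Omega (Set.Ioo (1/2 : ℝ) 1) := by
  constructor
  · intro δ₁ δ₂ h1 h12 h2
    have hI1 := Fo_integrable h1 (h12.trans h2)
    have hI2 := Fo_integrable (h1.trans h12) h2
    have hnn : 0 ≤ᵐ[volume.restrict (Ioo (0:ℝ) 1)] fun r => Fo δ₂ r - Fo δ₁ r := by
      filter_upwards [ae_restrict_mem measurableSet_Ioo] with r hr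
      exact sub_nonneg.mpr (Fo_lt hr h1 h12).le
    have hpos : 0 < ∫ r in Ioo (0:ℝ) 1, (Fo δ₂ r - Fo δ₁ r) := by
      rw [setIntegral_pos_iff_support_of_nonneg_ae hnn (hI2.sub hI1)]
      have hsub : Ioo (0:ℝ) 1 ⊆ Function.support fun r => Fo δ₂ r - Fo δ₁ r := fun r hr =>
        ne_of_gt (sub_pos.mpr (Fo_lt hr h1 h12))
      rw [Set.inter_eq_self_of_subset_right hsub]
      simp [Real.volume_Ioo]
    rw [integral_sub hI2 hI1] at hpos
    rw [Omega_eq, Omega_eq]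
    have hπ : 0 < 1/Real.pi := by positivity
    exact mul_lt_mul_of_pos_left (by linarith) hπ
  · intro δ₀ hδ₀
    obtain ⟨hδl, hδr⟩ := hδ₀
    apply ContinuousAt.continuousWithinAt
    set a : ℝ := (1/2 + δ₀)/2 with ha_def
    set b : ℝ := (δ₀ + 1)/2 with hb_def
    have ha1 : 1/2 < a := by rw [ha_def]; linarith
    have ha2 : a < δ₀ := by rw [ha_def]; linarith
    have hb1 : δ₀ < b := by rw [hb_def]; linarith
    have hb2 : b < 1 := by rw [hb_def]; linarith
    have key : ContinuousAt (fun δ => ∫ r in Ioo (0:ℝ) 1, Fo δ r) δ₀ := by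
      apply continuousAt_of_dominated
        (bound := fun r => (2/(2*a - 1) + 1) * (r ^ (-b) * (1 - r) ^ (-(1:ℝ)/2)))
      · exact Filter.Eventually.of_forall fun δ =>
          (Fo_contOn δ).aestronglyMeasurable measurableSet_Ioo
      · filter_upwards [Ioo_mem_nhds ha2 hb1] with δ hδ
        filter_upwards [ae_restrict_mem measurableSet_Ioo] with r hr
        exact Fo_bound ha1 hb2 hδ.1.le hδ.2.le hr
      · exact (bound_integrable_s6 (by linarith) hb2).const_mul _
      · filter_upwards [ae_restrict_mem measurableSet_Ioo] with r hr
        have hr0 : (0:ℝ) < r := hr.1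
        have hc1 : ContinuousAt (fun δ : ℝ => 1 / (1 - 2*δ)) δ₀ := by
          apply ContinuousAt.div continuousAt_const (by fun_prop)
          intro h
          have : (1:ℝ) - 2*δ₀ = 0 := h
          linarith
        have hc2 : ContinuousAt (fun δ : ℝ => r ^ (-δ)) δ₀ :=
          (Real.continuousAt_const_rpow hr0.ne').comp (continuous_neg.continuousAt)
        have hc3 : ContinuousAt (fun δ : ℝ => r ^ ((1:ℝ)/2 - δ)) δ₀ :=
          (Real.continuousAt_const_rpow hr0.ne').comp
            ((continuous_const.sub continuous_id).continuousAt)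
        exact continuousAt_const.mul
          ((hc1.mul (continuousAt_const.sub hc2)).add hc3)
    exact continuousAt_const.mul key
end

section
/- Ω(δ) tends to +∞ as δ tends to 1 from the left, i.e. for every M > 0 there exists δ₀ < 1 such that for all δ with δ₀ < δ < 1 one has Ω(δ) > M. -/
open MeasureTheory

namespace OmegaAux

open Set Real

noncomputable def f (δ : ℝ) (r : ℝ) : ℝ :=
  (1 / (1 + Real.sqrt (1 - r))) * (1 - r) ^ (-(1:ℝ)/2) *
    ((1 / (1 - 2*δ)) * (r ^ (-(1:ℝ)/2) - r ^ (-δ)) + r ^ ((1:ℝ)/2 - δ))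

lemma f_meas (δ : ℝ) : Measurable (f δ) := by
  unfold f
  fun_prop

/-- rewrite the inner factor. -/
lemma inner_eq (δ r : ℝ) :
    (1 / (1 - 2*δ)) * (r ^ (-(1:ℝ)/2) - r ^ (-δ)) + r ^ ((1:ℝ)/2 - δ)
      = (1 / (2*δ - 1)) * (r ^ (-δ) - r ^ (-(1:ℝ)/2)) + r ^ ((1:ℝ)/2 - δ) := by
  rw [show (1 - 2*δ) = -(2*δ - 1) by ring, div_neg, neg_mul, ← mul_neg, neg_sub]

lemma sqrt_le_one {r : ℝ} (hr : 0 ≤ r) : Real.sqrt (1 - r) ≤ 1 := by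
  have h := Real.sqrt_le_sqrt (show 1 - r ≤ 1 by linarith)
  rwa [Real.sqrt_one] at h

-- Pointwise facts for δ ∈ (3/4, 1), r ∈ (0,1)
section pointwise
variable {δ r : ℝ} (hδ1 : 3/4 < δ) (hδ2 : δ < 1) (hr0 : 0 < r) (hr1 : r < 1)

include hδ1 hδ2 hr0 hr1 in
lemma inner_nonneg :
    0 ≤ (1 / (1 - 2*δ)) * (r ^ (-(1:ℝ)/2) - r ^ (-δ)) + r ^ ((1:ℝ)/2 - δ) := by
  rw [inner_eq]
  have h1 : r ^ (-(1:ℝ)/2) ≤ r ^ (-δ) :=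
    Real.rpow_le_rpow_of_exponent_ge hr0 hr1.le (by linarith)
  have h2 : (0:ℝ) ≤ 1 / (2*δ - 1) := le_of_lt (div_pos one_pos (by linarith))
  have h3 : (0:ℝ) ≤ r ^ ((1:ℝ)/2 - δ) := Real.rpow_nonneg hr0.le _
  nlinarith

include hδ1 hδ2 hr0 hr1 in
lemma inner_le : (1 / (1 - 2*δ)) * (r ^ (-(1:ℝ)/2) - r ^ (-δ)) + r ^ ((1:ℝ)/2 - δ)
    ≤ 3 * r ^ (-δ) := by
  rw [inner_eq]
  have h1 : (0:ℝ) ≤ r ^ (-(1:ℝ)/2) := Real.rpow_nonneg hr0.le _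
  have h2 : 1 / (2*δ - 1) ≤ 2 := by
    rw [div_le_iff₀ (by linarith)]; linarith
  have h2' : (0:ℝ) ≤ 1 / (2*δ - 1) := le_of_lt (div_pos one_pos (by linarith))
  have h3 : r ^ ((1:ℝ)/2 - δ) ≤ r ^ (-δ) :=
    Real.rpow_le_rpow_of_exponent_ge hr0 hr1.le (by linarith)
  have h4 : r ^ (-δ) - r ^ (-(1:ℝ)/2) ≤ r ^ (-δ) := by linarith
  have h5 : r ^ (-(1:ℝ)/2) ≤ r ^ (-δ) :=
    Real.rpow_le_rpow_of_exponent_ge hr0 hr1.le (by linarith)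
  have h6 : (0:ℝ) ≤ r ^ (-δ) := Real.rpow_nonneg hr0.le _
  nlinarith

include hδ1 hδ2 hr0 hr1 in
lemma f_nonneg : 0 ≤ f δ r := by
  unfold f
  have hA : (0:ℝ) ≤ 1 / (1 + Real.sqrt (1 - r)) := by positivity
  have hB : (0:ℝ) ≤ (1 - r) ^ (-(1:ℝ)/2) := Real.rpow_nonneg (by linarith) _
  have hC := inner_nonneg hδ1 hδ2 hr0 hr1
  positivity

include hδ1 hδ2 hr0 hr1 in
lemma f_lower (hr2 : r < 1/2) :
    (1/2) * (r ^ (-δ) - r ^ (-(1:ℝ)/2)) ≤ f δ r := by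
  unfold f
  rw [inner_eq]
  have hs := sqrt_le_one hr0.le
  have hs0 : 0 ≤ Real.sqrt (1 - r) := Real.sqrt_nonneg _
  have hA : (1:ℝ)/2 ≤ 1 / (1 + Real.sqrt (1 - r)) := by
    rw [le_div_iff₀ (by linarith)]; linarith
  have hB : (1:ℝ) ≤ (1 - r) ^ (-(1:ℝ)/2) :=
    Real.one_le_rpow_of_pos_of_le_one_of_nonpos (by linarith) (by linarith) (by norm_num)
  have hD : r ^ (-(1:ℝ)/2) ≤ r ^ (-δ) :=
    Real.rpow_le_rpow_of_exponent_ge hr0 hr1.le (by linarith)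
  have hD' : (0:ℝ) ≤ r ^ (-δ) - r ^ (-(1:ℝ)/2) := by linarith
  have hE : (1:ℝ) ≤ 1 / (2*δ - 1) := by
    rw [le_div_iff₀ (by linarith)]; linarith
  have hF : (0:ℝ) ≤ r ^ ((1:ℝ)/2 - δ) := Real.rpow_nonneg hr0.le _
  calc (1/2) * (r ^ (-δ) - r ^ (-(1:ℝ)/2))
      = ((1/2) * 1) * (1 * (r ^ (-δ) - r ^ (-(1:ℝ)/2)) + 0) := by ring
    _ ≤ (1 / (1 + Real.sqrt (1 - r)) * (1 - r) ^ (-(1:ℝ)/2)) *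
        ((1 / (2*δ - 1)) * (r ^ (-δ) - r ^ (-(1:ℝ)/2)) + r ^ ((1:ℝ)/2 - δ)) := by
        apply mul_le_mul
        · exact mul_le_mul hA hB zero_le_one (by linarith)
        · exact add_le_add (mul_le_mul_of_nonneg_right hE hD') hF
        · linarith
        · positivity

include hδ1 hδ2 hr0 hr1 in
lemma f_upper1 (hr2 : r ≤ 1/2) : f δ r ≤ 6 * r ^ (-δ) := by
  unfold f
  have hs0 : 0 ≤ Real.sqrt (1 - r) := Real.sqrt_nonneg _
  have hA : 1 / (1 + Real.sqrt (1 - r)) ≤ 1 := by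
    rw [div_le_iff₀ (by linarith)]; linarith
  have hA0 : (0:ℝ) ≤ 1 / (1 + Real.sqrt (1 - r)) := by positivity
  have hB : (1 - r) ^ (-(1:ℝ)/2) ≤ 2 := by
    calc (1 - r) ^ (-(1:ℝ)/2) ≤ ((1:ℝ)/4) ^ (-(1:ℝ)/2) :=
          Real.rpow_le_rpow_of_nonpos (by norm_num) (by linarith) (by norm_num)
      _ = 2 := by
          rw [show ((1:ℝ)/4) = (2:ℝ)^(-2:ℝ) by
                rw [Real.rpow_neg (by norm_num), show ((2:ℝ)^(2:ℝ)) = 4 by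
                  rw [show (2:ℝ) = ((2:ℕ):ℝ) by norm_num, Real.rpow_natCast]; norm_num]
                norm_num,
              ← Real.rpow_mul (by norm_num)]
          norm_num
  have hB0 : (0:ℝ) ≤ (1 - r) ^ (-(1:ℝ)/2) := Real.rpow_nonneg (by linarith) _
  have hC := inner_le hδ1 hδ2 hr0 hr1
  have hC0 := inner_nonneg hδ1 hδ2 hr0 hr1
  have h6 : (0:ℝ) ≤ r ^ (-δ) := Real.rpow_nonneg hr0.le _
  calc (1 / (1 + Real.sqrt (1 - r))) * (1 - r) ^ (-(1:ℝ)/2) *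
        ((1 / (1 - 2*δ)) * (r ^ (-(1:ℝ)/2) - r ^ (-δ)) + r ^ ((1:ℝ)/2 - δ))
      ≤ (1 * 2) * (3 * r ^ (-δ)) := by
        apply mul_le_mul _ hC hC0 (by norm_num)
        exact mul_le_mul hA hB hB0 zero_le_one
    _ = 6 * r ^ (-δ) := by ring

include hδ1 hδ2 hr0 hr1 in
lemma f_upper2 (hr2 : 1/2 < r) : f δ r ≤ 6 * (1 - r) ^ (-(1:ℝ)/2) := by
  unfold f
  have hs0 : 0 ≤ Real.sqrt (1 - r) := Real.sqrt_nonneg _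
  have hA : 1 / (1 + Real.sqrt (1 - r)) ≤ 1 := by
    rw [div_le_iff₀ (by linarith)]; linarith
  have hA0 : (0:ℝ) ≤ 1 / (1 + Real.sqrt (1 - r)) := by positivity
  have hB0 : (0:ℝ) ≤ (1 - r) ^ (-(1:ℝ)/2) := Real.rpow_nonneg (by linarith) _
  have hrd : r ^ (-δ) ≤ 2 := by
    calc r ^ (-δ) ≤ ((1:ℝ)/2) ^ (-δ) :=
          Real.rpow_le_rpow_of_nonpos (by norm_num) hr2.le (by linarith)
      _ = (2:ℝ) ^ δ := by
          rw [show ((1:ℝ)/2) = (2:ℝ)⁻¹ by norm_num, ← Real.rpow_neg_one (2:ℝ),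
              ← Real.rpow_mul (by norm_num)]
          ring_nf
      _ ≤ (2:ℝ) ^ (1:ℝ) := Real.rpow_le_rpow_of_exponent_le (by norm_num) hδ2.le
      _ = 2 := Real.rpow_one 2
  have hC := inner_le hδ1 hδ2 hr0 hr1
  have hC0 := inner_nonneg hδ1 hδ2 hr0 hr1
  calc (1 / (1 + Real.sqrt (1 - r))) * (1 - r) ^ (-(1:ℝ)/2) *
        ((1 / (1 - 2*δ)) * (r ^ (-(1:ℝ)/2) - r ^ (-δ)) + r ^ ((1:ℝ)/2 - δ))
      ≤ (1 * (1 - r) ^ (-(1:ℝ)/2)) * (3 * r ^ (-δ)) := by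
        apply mul_le_mul _ hC hC0 (by positivity)
        exact mul_le_mul_of_nonneg_right hA hB0
    _ ≤ (1 - r) ^ (-(1:ℝ)/2) * (3 * 2) := by
        rw [one_mul]
        apply mul_le_mul_of_nonneg_left _ hB0
        nlinarith [Real.rpow_nonneg hr0.le (-δ)]
    _ = 6 * (1 - r) ^ (-(1:ℝ)/2) := by ring

end pointwise

lemma integrable_rpow_Ioc (p : ℝ) (hp : -1 < p) :
    IntegrableOn (fun r : ℝ => r ^ p) (Ioc 0 (1/2)) := by
  have := (intervalIntegral.intervalIntegrable_rpow' (a := 0) (b := 1/2) hp)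
  exact this.1

lemma integrable_one_sub_rpow :
    IntegrableOn (fun r : ℝ => (1 - r) ^ (-(1:ℝ)/2)) (Ioc (1/2) 1) := by
  have h : IntervalIntegrable (fun x : ℝ => x ^ (-(1:ℝ)/2)) volume 0 (1/2) :=
    intervalIntegral.intervalIntegrable_rpow' (by norm_num)
  have h2 := (h.comp_sub_left 1).2
  simp only [show (1:ℝ) - 1/2 = 1/2 by norm_num, sub_zero] at h2
  exact h2

lemma f_integrableOn {δ : ℝ} (hδ1 : 3/4 < δ) (hδ2 : δ < 1) :
    IntegrableOn (f δ) (Ioo 0 1) := by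
  have hsub : Ioo (0:ℝ) 1 ⊆ Ioc 0 (1/2) ∪ Ioc (1/2) 1 := by
    intro x hx
    rcases le_or_gt x (1/2) with h | h
    · exact Or.inl ⟨hx.1, h⟩
    · exact Or.inr ⟨h, hx.2.le⟩
  apply IntegrableOn.mono_set _ hsub
  apply IntegrableOn.union
  · -- on Ioc 0 (1/2)
    apply Integrable.mono' ((integrable_rpow_Ioc (-δ) (by linarith)).const_mul 6)
      ((f_meas δ).aestronglyMeasurable.restrict)
    filter_upwards [ae_restrict_mem measurableSet_Ioc] with r hr
    rw [Real.norm_eq_abs, abs_of_nonneg (f_nonneg hδ1 hδ2 hr.1 (by linarith [hr.2]))]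
    exact f_upper1 hδ1 hδ2 hr.1 (by linarith [hr.2]) hr.2
  · -- on Ioc (1/2) 1 : handle r = 1 separately via Ioo and singleton
    have h1 : IntegrableOn (f δ) (Ioo (1/2) 1) := by
      have hb : IntegrableOn (fun r : ℝ => 6 * (1 - r) ^ (-(1:ℝ)/2)) (Ioc (1/2) 1) :=
        integrable_one_sub_rpow.const_mul 6
      apply Integrable.mono' (hb.mono_set Ioo_subset_Ioc_self)
        ((f_meas δ).aestronglyMeasurable.restrict)
      filter_upwards [ae_restrict_mem measurableSet_Ioo] with r hr
      rw [Real.norm_eq_abs, abs_of_nonneg (f_nonneg hδ1 hδ2 (by linarith [hr.1]) hr.2)]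
      exact f_upper2 hδ1 hδ2 (by linarith [hr.1]) hr.2 hr.1
    have hset : Ioo (1/2:ℝ) 1 ∪ {1} = Ioc (1/2) 1 := Set.Ioo_union_right (by norm_num)
    rw [IntegrableOn, ← hset]
    exact h1.union ((integrableOn_singleton_iff enorm_ne_top).2 (Or.inr (by simp)))

-- value of the comparison integral
lemma g_integral {δ : ℝ} (hδ1 : 3/4 < δ) (hδ2 : δ < 1) :
    ∫ r in Ioo (0:ℝ) (1/2), (1/2) * (r ^ (-δ) - r ^ (-(1:ℝ)/2))
      = (1/2) * (((1/2:ℝ) ^ (1 - δ)) / (1 - δ) - ((1/2:ℝ) ^ ((1:ℝ)/2)) / (1/2)) := by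
  have hconv : ∫ r in Ioo (0:ℝ) (1/2), (1/2) * (r ^ (-δ) - r ^ (-(1:ℝ)/2))
      = ∫ r in (0:ℝ)..(1/2), (1/2) * (r ^ (-δ) - r ^ (-(1:ℝ)/2)) := by
    rw [intervalIntegral.integral_of_le (by norm_num), integral_Ioc_eq_integral_Ioo]
  have hi1 : IntervalIntegrable (fun r : ℝ => r ^ (-δ)) volume 0 (1/2) :=
    intervalIntegral.intervalIntegrable_rpow' (by linarith)
  have hi2 : IntervalIntegrable (fun r : ℝ => r ^ (-(1:ℝ)/2)) volume 0 (1/2) :=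
    intervalIntegral.intervalIntegrable_rpow' (by norm_num)
  rw [hconv, intervalIntegral.integral_const_mul, intervalIntegral.integral_sub hi1 hi2,
      integral_rpow (Or.inl (by linarith)), integral_rpow (Or.inl (by norm_num)),
      Real.zero_rpow (by linarith : -δ + 1 ≠ 0), Real.zero_rpow (by norm_num : -(1:ℝ)/2 + 1 ≠ 0),
      show -δ + 1 = 1 - δ by ring, show -(1:ℝ)/2 + 1 = (1:ℝ)/2 by ring]
  ring

lemma key_lower {δ : ℝ} (hδ1 : 3/4 < δ) (hδ2 : δ < 1) :
    (1/2) * (((1/2:ℝ) ^ (1 - δ)) / (1 - δ) - ((1/2:ℝ) ^ ((1:ℝ)/2)) / (1/2))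
      ≤ ∫ r in Ioo (0:ℝ) 1, f δ r := by
  have hInt := f_integrableOn hδ1 hδ2
  have h1 : ∫ r in Ioo (0:ℝ) (1/2), f δ r ≤ ∫ r in Ioo (0:ℝ) 1, f δ r := by
    apply setIntegral_mono_set hInt
    · filter_upwards [ae_restrict_mem measurableSet_Ioo] with r hr
      exact f_nonneg hδ1 hδ2 hr.1 hr.2
    · exact (Ioo_subset_Ioo_right (by norm_num)).eventuallyLE
  refine le_trans ?_ h1
  rw [← g_integral hδ1 hδ2]
  apply setIntegral_mono_on
  · have ha : IntegrableOn (fun r : ℝ => r ^ (-δ) - r ^ (-(1:ℝ)/2)) (Ioo 0 (1/2)) := by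
      apply Integrable.sub
      · exact (integrable_rpow_Ioc (-δ) (by linarith)).mono_set Ioo_subset_Ioc_self
      · exact (integrable_rpow_Ioc (-(1:ℝ)/2) (by norm_num)).mono_set Ioo_subset_Ioc_self
    exact ha.const_mul _
  · exact hInt.mono_set (Ioo_subset_Ioo_right (by norm_num))
  · exact measurableSet_Ioo
  · intro r hr
    exact f_lower hδ1 hδ2 hr.1 (by linarith [hr.2]) hr.2

end OmegaAux

theorem Omega_tendsto_atTop :
    ∀ M : ℝ, 0 < M → ∃ δ₀ : ℝ, δ₀ < 1 ∧
      ∀ δ : ℝ, δ₀ < δ → δ < 1 → Omega δ > M := by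
  intro M hM
  have hπ : (0:ℝ) < Real.pi := Real.pi_pos
  set ε : ℝ := 1 / (4 * (Real.pi * M + 1)) with hε
  have hε0 : 0 < ε := by positivity
  refine ⟨max (3/4) (1 - ε), max_lt (by norm_num) (by linarith), ?_⟩
  intro δ hδ₀ hδ1
  have hδ34 : 3/4 < δ := lt_of_le_of_lt (le_max_left _ _) hδ₀
  have hδε : 1 - ε < δ := lt_of_le_of_lt (le_max_right _ _) hδ₀
  have h1δ : 0 < 1 - δ := by linarith
  have hkey := OmegaAux.key_lower hδ34 hδ1
  have hhalf : (1/2:ℝ) ≤ (1/2:ℝ) ^ (1 - δ) := by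
    calc (1/2:ℝ) = (1/2:ℝ) ^ (1:ℝ) := (Real.rpow_one _).symm
      _ ≤ (1/2:ℝ) ^ (1 - δ) :=
          Real.rpow_le_rpow_of_exponent_ge (by norm_num) (by norm_num) (by linarith)
  have hsq : ((1/2:ℝ) ^ ((1:ℝ)/2)) ≤ 1 :=
    Real.rpow_le_one (by norm_num) (by norm_num) (by norm_num)
  have hJ : 1 / (4 * (1 - δ)) - 1 ≤ ∫ r in Set.Ioo (0:ℝ) 1, OmegaAux.f δ r := by
    refine le_trans ?_ hkey
    have e1 : (1/2:ℝ) / (1 - δ) ≤ ((1/2:ℝ) ^ (1 - δ)) / (1 - δ) := by gcongr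
    have e2 : ((1/2:ℝ) ^ ((1:ℝ)/2)) / (1/2) ≤ 2 := by
      rw [div_le_iff₀ (by norm_num)]; linarith
    have e3 : 1 / (4 * (1 - δ)) = (1/2) * ((1/2:ℝ) / (1 - δ)) := by
      field_simp; ring
    linarith
  -- 1/(4(1-δ)) > π M + 1
  have h4 : 4 * (1 - δ) < 1 / (Real.pi * M + 1) := by
    have h' : 1 - δ < ε := by linarith
    rw [hε] at h'
    have e : (1:ℝ) / (4 * (Real.pi * M + 1)) = (1 / (Real.pi * M + 1)) / 4 := by
      rw [div_div]; ring_nf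
    rw [e] at h'
    linarith
  have hpos : (0:ℝ) < Real.pi * M + 1 := by positivity
  have h5 : Real.pi * M + 1 < 1 / (4 * (1 - δ)) := by
    rw [lt_div_iff₀ (by linarith)]
    calc (Real.pi * M + 1) * (4 * (1 - δ))
        < (Real.pi * M + 1) * (1 / (Real.pi * M + 1)) := by
          exact mul_lt_mul_of_pos_left h4 hpos
      _ = 1 := by field_simp
  have hOmega : Omega δ = (1 / Real.pi) * ∫ r in Set.Ioo (0:ℝ) 1, OmegaAux.f δ r := rfl
  rw [hOmega]
  have hI : Real.pi * M < ∫ r in Set.Ioo (0:ℝ) 1, OmegaAux.f δ r := by linarith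
  calc M = (1 / Real.pi) * (Real.pi * M) := by field_simp
    _ < (1 / Real.pi) * ∫ r in Set.Ioo (0:ℝ) 1, OmegaAux.f δ r := by
        exact mul_lt_mul_of_pos_left hI (by positivity)
end

section
/- Ω(δ) tends to 0 as δ tends to −∞, i.e. for every ε > 0 there exists a real number A such that for all δ < A one has 0 ≤ Ω(δ) < ε. -/
open MeasureTheory

open Set Filter Topology

lemma intOn_rpow_half : IntegrableOn (fun r : ℝ => r ^ (-(1:ℝ)/2)) (Ioc (0:ℝ) (1/2)) := by
  have h := intervalIntegral.intervalIntegrable_rpow' (a := 0) (b := 1/2) (r := -(1:ℝ)/2)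
    (by norm_num)
  rw [intervalIntegrable_iff_integrableOn_Ioc_of_le (by norm_num)] at h
  exact h

lemma intOn_rpow_half' : IntegrableOn (fun r : ℝ => (1 - r) ^ (-(1:ℝ)/2)) (Ioc (1/2:ℝ) 1) := by
  have h := intervalIntegral.intervalIntegrable_rpow' (a := 0) (b := 1/2) (r := -(1:ℝ)/2)
    (by norm_num)
  have h2 := (h.comp_sub_left 1).symm
  norm_num at h2
  rw [intervalIntegrable_iff_integrableOn_Ioc_of_le (by norm_num)] at h2
  have he : (fun r : ℝ => (1 - r) ^ (-(1:ℝ)/2)) = (fun x : ℝ => (1 - x) ^ (-(1/2:ℝ))) := by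
    funext x; norm_num
  rw [he]
  exact h2

lemma g_meas : Measurable (fun r : ℝ => (1 - r) ^ (-(1:ℝ)/2) * (r ^ (-(1:ℝ)/2) + 1)) := by
  fun_prop

lemma g_int : IntegrableOn (fun r : ℝ => (1 - r) ^ (-(1:ℝ)/2) * (r ^ (-(1:ℝ)/2) + 1))
    (Ioo (0:ℝ) 1) := by
  have h1 : IntegrableOn (fun r : ℝ => (1 - r) ^ (-(1:ℝ)/2) * (r ^ (-(1:ℝ)/2) + 1))
      (Ioc (0:ℝ) (1/2)) := by
    refine Integrable.mono'
      (g := fun r : ℝ => ((1/2:ℝ) ^ (-(1:ℝ)/2)) * (r ^ (-(1:ℝ)/2) + 1))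
      ((intOn_rpow_half.add (integrableOn_const
        measure_Ioc_lt_top.ne (by simp))).const_mul ((1/2:ℝ) ^ (-(1:ℝ)/2)))
      g_meas.aestronglyMeasurable ?_
    rw [ae_restrict_iff' measurableSet_Ioc]
    filter_upwards with r hr
    have hr0 : (0:ℝ) < r := hr.1
    have hr2 : r ≤ 1/2 := hr.2
    have h1r : (1 - r) ^ (-(1:ℝ)/2) ≤ ((1:ℝ)/2) ^ (-(1:ℝ)/2) :=
      Real.rpow_le_rpow_of_nonpos (by norm_num) (by linarith) (by norm_num)
    have hnn : 0 ≤ (1 - r) ^ (-(1:ℝ)/2) * (r ^ (-(1:ℝ)/2) + 1) :=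
      mul_nonneg (Real.rpow_nonneg (by linarith) _) (by positivity)
    rw [Real.norm_eq_abs, abs_of_nonneg hnn]
    exact mul_le_mul_of_nonneg_right h1r (by positivity)
  have h2 : IntegrableOn (fun r : ℝ => (1 - r) ^ (-(1:ℝ)/2) * (r ^ (-(1:ℝ)/2) + 1))
      (Ioc (1/2:ℝ) 1) := by
    refine Integrable.mono'
      (g := fun r : ℝ => (1 - r) ^ (-(1:ℝ)/2) * (((1/2:ℝ) ^ (-(1:ℝ)/2)) + 1))
      (intOn_rpow_half'.mul_const (((1/2:ℝ) ^ (-(1:ℝ)/2)) + 1))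
      g_meas.aestronglyMeasurable ?_
    rw [ae_restrict_iff' measurableSet_Ioc]
    filter_upwards with r hr
    have hr0 : (1/2:ℝ) < r := hr.1
    have hr2 : r ≤ 1 := hr.2
    have h1r : r ^ (-(1:ℝ)/2) ≤ ((1:ℝ)/2) ^ (-(1:ℝ)/2) :=
      Real.rpow_le_rpow_of_nonpos (by norm_num) (by linarith) (by norm_num)
    have hnn : 0 ≤ (1 - r) ^ (-(1:ℝ)/2) * (r ^ (-(1:ℝ)/2) + 1) :=
      mul_nonneg (Real.rpow_nonneg (by linarith) _) (by positivity)
    rw [Real.norm_eq_abs, abs_of_nonneg hnn]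
    exact mul_le_mul_of_nonneg_left (by linarith) (Real.rpow_nonneg (by linarith) _)
  have hsub : Ioo (0:ℝ) 1 ⊆ Ioc (0:ℝ) (1/2) ∪ Ioc (1/2:ℝ) 1 := by
    intro x hx
    rcases le_or_gt x (1/2) with h | h
    · exact Or.inl ⟨hx.1, h⟩
    · exact Or.inr ⟨h, hx.2.le⟩
  exact (h1.union h2).mono_set hsub

section helper

noncomputable def Ff (δ : ℝ) (r : ℝ) : ℝ :=
  (1 / (1 + Real.sqrt (1 - r))) * (1 - r) ^ (-(1:ℝ)/2) *
    ((1 / (1 - 2*δ)) * (r ^ (-(1:ℝ)/2) - r ^ (-δ)) + r ^ ((1:ℝ)/2 - δ))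

lemma Ff_nonneg {δ r : ℝ} (hδ : δ ≤ 0) (hr : r ∈ Ioo (0:ℝ) 1) : 0 ≤ Ff δ r := by
  obtain ⟨hr0, hr1⟩ := hr
  have hb : (0:ℝ) < 1 - r := by linarith
  have ha0 : 0 ≤ 1 / (1 + Real.sqrt (1 - r)) := by positivity
  have hsub : r ^ (-δ) ≤ r ^ (-(1:ℝ)/2) :=
    Real.rpow_le_rpow_of_exponent_ge hr0 hr1.le (by linarith)
  have hinner : 0 ≤ (1 / (1 - 2*δ)) * (r ^ (-(1:ℝ)/2) - r ^ (-δ)) + r ^ ((1:ℝ)/2 - δ) := by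
    have h1 : (0:ℝ) < 1 - 2*δ := by linarith
    have := Real.rpow_nonneg hr0.le ((1:ℝ)/2 - δ)
    have : 0 ≤ (1 / (1 - 2*δ)) * (r ^ (-(1:ℝ)/2) - r ^ (-δ)) := by
      apply mul_nonneg (by positivity); linarith
    nlinarith [Real.rpow_nonneg hr0.le ((1:ℝ)/2 - δ)]
  exact mul_nonneg (mul_nonneg ha0 (Real.rpow_nonneg hb.le _)) hinner

lemma Ff_le {δ r : ℝ} (hδ : δ ≤ 0) (hr : r ∈ Ioo (0:ℝ) 1) :
    Ff δ r ≤ (1 - r) ^ (-(1:ℝ)/2) * (r ^ (-(1:ℝ)/2) + 1) := by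
  obtain ⟨hr0, hr1⟩ := hr
  have hb : (0:ℝ) < 1 - r := by linarith
  have ha1 : 1 / (1 + Real.sqrt (1 - r)) ≤ 1 := by
    rw [div_le_one (by positivity)]
    have := Real.sqrt_nonneg (1 - r); linarith
  have ha0 : 0 ≤ 1 / (1 + Real.sqrt (1 - r)) := by positivity
  have hB0 : 0 ≤ (1 - r) ^ (-(1:ℝ)/2) := Real.rpow_nonneg hb.le _
  have hsub : r ^ (-δ) ≤ r ^ (-(1:ℝ)/2) :=
    Real.rpow_le_rpow_of_exponent_ge hr0 hr1.le (by linarith)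
  have h12 : (0:ℝ) < 1 - 2*δ := by linarith
  have hfrac : 1 / (1 - 2*δ) ≤ 1 := by
    rw [div_le_one h12]; linarith
  have ht1 : (1 / (1 - 2*δ)) * (r ^ (-(1:ℝ)/2) - r ^ (-δ)) ≤ r ^ (-(1:ℝ)/2) := by
    have h0 : 0 ≤ r ^ (-(1:ℝ)/2) - r ^ (-δ) := by linarith
    have := mul_le_mul_of_nonneg_right hfrac h0
    rw [one_mul] at this
    have hd : r ^ (-(1:ℝ)/2) - r ^ (-δ) ≤ r ^ (-(1:ℝ)/2) := by
      have := Real.rpow_nonneg hr0.le (-δ); linarith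
    linarith
  have ht2 : r ^ ((1:ℝ)/2 - δ) ≤ 1 :=
    Real.rpow_le_one hr0.le hr1.le (by linarith)
  have hinner_le : (1 / (1 - 2*δ)) * (r ^ (-(1:ℝ)/2) - r ^ (-δ)) + r ^ ((1:ℝ)/2 - δ)
      ≤ r ^ (-(1:ℝ)/2) + 1 := by linarith
  have hinner0 : 0 ≤ (1 / (1 - 2*δ)) * (r ^ (-(1:ℝ)/2) - r ^ (-δ)) + r ^ ((1:ℝ)/2 - δ) := by
    have h0 : 0 ≤ r ^ (-(1:ℝ)/2) - r ^ (-δ) := by linarith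
    have := Real.rpow_nonneg hr0.le ((1:ℝ)/2 - δ)
    have : 0 ≤ (1 / (1 - 2*δ)) * (r ^ (-(1:ℝ)/2) - r ^ (-δ)) := mul_nonneg (by positivity) h0
    nlinarith [Real.rpow_nonneg hr0.le ((1:ℝ)/2 - δ)]
  calc Ff δ r ≤ (1 - r) ^ (-(1:ℝ)/2) *
        ((1 / (1 - 2*δ)) * (r ^ (-(1:ℝ)/2) - r ^ (-δ)) + r ^ ((1:ℝ)/2 - δ)) := by
        unfold Ff
        exact mul_le_mul_of_nonneg_right (mul_le_of_le_one_left hB0 ha1) hinner0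
    _ ≤ (1 - r) ^ (-(1:ℝ)/2) * (r ^ (-(1:ℝ)/2) + 1) :=
        mul_le_mul_of_nonneg_left hinner_le hB0

lemma Ff_meas (δ : ℝ) : Measurable (Ff δ) := by unfold Ff; fun_prop

lemma Ff_tendsto {r : ℝ} (hr : r ∈ Ioo (0:ℝ) 1) :
    Tendsto (fun δ => Ff δ r) atBot (𝓝 0) := by
  obtain ⟨hr0, hr1⟩ := hr
  have hexp : Tendsto (fun δ : ℝ => 1 - 2*δ) atBot atTop := by
    have h1 : Tendsto (fun δ : ℝ => -δ) atBot atTop := tendsto_neg_atBot_atTop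
    have h2 : Tendsto (fun δ : ℝ => 2 * -δ) atBot atTop := h1.const_mul_atTop two_pos
    have h3 : Tendsto (fun δ : ℝ => 1 + 2 * -δ) atBot atTop :=
      tendsto_atTop_add_const_left _ 1 h2
    convert h3 using 2 with δ; ring
  have h1 : Tendsto (fun δ : ℝ => 1 / (1 - 2*δ)) atBot (𝓝 0) := by
    simpa [one_div, Pi.inv_def] using hexp.inv_tendsto_atTop
  have hbase := tendsto_rpow_atTop_of_base_lt_one r (by linarith) hr1
  have h2 : Tendsto (fun δ : ℝ => r ^ (-δ)) atBot (𝓝 0) :=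
    hbase.comp tendsto_neg_atBot_atTop
  have h3 : Tendsto (fun δ : ℝ => r ^ ((1:ℝ)/2 - δ)) atBot (𝓝 0) := by
    have hexp2 : Tendsto (fun δ : ℝ => (1:ℝ)/2 - δ) atBot atTop := by
      have := tendsto_atTop_add_const_left atBot ((1:ℝ)/2) tendsto_neg_atBot_atTop
      simpa [sub_eq_add_neg] using this
    exact hbase.comp hexp2
  have hinner : Tendsto (fun δ : ℝ =>
      (1 / (1 - 2*δ)) * (r ^ (-(1:ℝ)/2) - r ^ (-δ)) + r ^ ((1:ℝ)/2 - δ)) atBot (𝓝 0) := by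
    have := (h1.mul ((tendsto_const_nhds (x := r ^ (-(1:ℝ)/2))).sub h2)).add h3
    simpa using this
  have := hinner.const_mul ((1 / (1 + Real.sqrt (1 - r))) * (1 - r) ^ (-(1:ℝ)/2))
  simpa [Ff, mul_assoc] using this

end helper

theorem Omega_tendsto_zero_atBot :
    ∀ ε : ℝ, 0 < ε → ∃ A : ℝ, ∀ δ : ℝ, δ < A → 0 ≤ Omega δ ∧ Omega δ < ε := by
  have hO : ∀ δ : ℝ, Omega δ = (1 / Real.pi) * ∫ r in Ioo (0:ℝ) 1, Ff δ r := fun δ => rfl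
  have hT : Tendsto (fun δ => ∫ r in Ioo (0:ℝ) 1, Ff δ r) atBot (𝓝 0) := by
    have := MeasureTheory.tendsto_integral_filter_of_dominated_convergence
      (μ := volume.restrict (Ioo (0:ℝ) 1)) (l := atBot) (F := Ff) (f := fun _ => (0:ℝ))
      (bound := fun r => (1 - r) ^ (-(1:ℝ)/2) * (r ^ (-(1:ℝ)/2) + 1))
      (Eventually.of_forall fun δ => (Ff_meas δ).aestronglyMeasurable)
      ?_ g_int ?_
    · simpa using this
    · filter_upwards [eventually_le_atBot (0:ℝ)] with δ hδ
      rw [ae_restrict_iff' measurableSet_Ioo]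
      filter_upwards with r hr
      rw [Real.norm_eq_abs, abs_of_nonneg (Ff_nonneg hδ hr)]
      exact Ff_le hδ hr
    · rw [ae_restrict_iff' measurableSet_Ioo]
      filter_upwards with r hr
      exact Ff_tendsto hr
  have hΩ : Tendsto Omega atBot (𝓝 0) := by
    have := hT.const_mul (1 / Real.pi)
    show Tendsto (fun δ => Omega δ) atBot (𝓝 0)
    simpa [hO, one_div] using this
  intro ε hε
  have hev : ∀ᶠ δ in atBot, |Omega δ| < ε := by
    have := hΩ.eventually (Metric.ball_mem_nhds (0:ℝ) hε)
    filter_upwards [this] with δ hδ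
    simpa [Real.dist_eq] using hδ
  obtain ⟨A, hA⟩ := eventually_atBot.mp hev
  refine ⟨min A 0, fun δ hδ => ?_⟩
  have hδA : δ ≤ A := le_of_lt (lt_of_lt_of_le hδ (min_le_left _ _))
  have hδ0 : δ ≤ 0 := le_of_lt (lt_of_lt_of_le hδ (min_le_right _ _))
  have hnn : 0 ≤ Omega δ := by
    rw [hO]
    refine mul_nonneg (by positivity) ?_
    exact setIntegral_nonneg measurableSet_Ioo fun r hr => Ff_nonneg hδ0 hr
  exact ⟨hnn, (abs_lt.mp (hA δ hδA)).2⟩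
end
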